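/- arXiv:1811.12711 — 12 statements merged into one kernel-verified Lean document; each statement's English description precedes it below -/
import Mathlib

section
/- Let ε > 0 and define φ^ε(z) = 2z·ln(ε + |z|) for z ∈ ℂ (i.e. φ^ε(z) = z·ln((ε+|z|)²)). Then for all z₁, z₂ ∈ ℂ, |Im((φ^ε(z₁) − φ^ε(z₂))·(conj(z₁) − conj(z₂)))| ≤ 2·|z₁ − z₂|². -/
theorem stmt_0 (ε : ℝ) (hε : 0 < ε) (z₁ z₂ : ℂ) :
    |((2 * z₁ * (Real.log (ε + ‖z₁‖) : ℂ)
        - 2 * z₂ * (Real.log (ε + ‖z₂‖) : ℂ))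
      * (starRingEnd ℂ z₁ - starRingEnd ℂ z₂)).im|
      ≤ 2 * ‖z₁ - z₂‖ ^ 2 := by
  set r₁ := ‖z₁‖ with hr₁
  set r₂ := ‖z₂‖ with hr₂
  set L₁ := Real.log (ε + r₁) with hL₁
  set L₂ := Real.log (ε + r₂) with hL₂
  set d := ‖z₁ - z₂‖ with hd
  have hr₁0 : 0 ≤ r₁ := norm_nonneg _
  have hr₂0 : 0 ≤ r₂ := norm_nonneg _
  have hd0 : 0 ≤ d := norm_nonneg _
  have he₁ : 0 < ε + r₁ := by positivity
  have he₂ : 0 < ε + r₂ := by positivity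
  set m := min r₁ r₂ with hm
  have hm0 : 0 ≤ m := le_min hr₁0 hr₂0
  have hem : 0 < ε + m := by positivity
  -- Step 1: simplify the imaginary part
  have hIm : ((2 * z₁ * (L₁ : ℂ) - 2 * z₂ * (L₂ : ℂ))
      * (starRingEnd ℂ z₁ - starRingEnd ℂ z₂)).im
      = 2 * (L₂ - L₁) * (z₁ * starRingEnd ℂ z₂).im := by
    simp [Complex.mul_im, Complex.sub_im, Complex.sub_re, Complex.mul_re,
      Complex.conj_re, Complex.conj_im, Complex.ofReal_re, Complex.ofReal_im]
    ring
  rw [hIm]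
  -- Step 2: bound |(z₁ * conj z₂).im| ≤ d * m
  have hb1 : |(z₁ * starRingEnd ℂ z₂).im| ≤ d * r₂ := by
    have heq : (z₁ * starRingEnd ℂ z₂).im = ((z₁ - z₂) * starRingEnd ℂ z₂).im := by
      have h : (z₁ - z₂) * starRingEnd ℂ z₂
          = z₁ * starRingEnd ℂ z₂ - z₂ * starRingEnd ℂ z₂ := by ring
      rw [h, Complex.sub_im, Complex.mul_conj]
      simp
    rw [heq]
    calc |((z₁ - z₂) * starRingEnd ℂ z₂).im| ≤ ‖(z₁ - z₂) * starRingEnd ℂ z₂‖ :=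
          Complex.abs_im_le_norm _
      _ = d * r₂ := by rw [norm_mul, Complex.norm_conj]
  have hb2 : |(z₁ * starRingEnd ℂ z₂).im| ≤ d * r₁ := by
    have heq : (z₁ * starRingEnd ℂ z₂).im = (z₁ * starRingEnd ℂ (z₂ - z₁)).im := by
      have h : z₁ * starRingEnd ℂ (z₂ - z₁)
          = z₁ * starRingEnd ℂ z₂ - z₁ * starRingEnd ℂ z₁ := by rw [map_sub]; ring
      rw [h, Complex.sub_im, Complex.mul_conj]
      simp
    rw [heq]
    calc |(z₁ * starRingEnd ℂ (z₂ - z₁)).im| ≤ ‖z₁ * starRingEnd ℂ (z₂ - z₁)‖ :=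
          Complex.abs_im_le_norm _
      _ = r₁ * ‖z₂ - z₁‖ := by rw [norm_mul, Complex.norm_conj]
      _ = d * r₁ := by
          have h' : ‖z₂ - z₁‖ = d := by
            rw [hd, ← neg_sub z₁ z₂, norm_neg]
          rw [h']; ring
  have h2 : |(z₁ * starRingEnd ℂ z₂).im| ≤ d * m := by
    rcases min_cases r₁ r₂ with ⟨h, _⟩ | ⟨h, _⟩
    · rw [hm, h]; exact hb2
    · rw [hm, h]; exact hb1
  -- Step 3: bound |L₁ - L₂| ≤ d / (ε + m)
  have hrd : |r₁ - r₂| ≤ d := abs_norm_sub_norm_le z₁ z₂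
  have hlog : ∀ x y : ℝ, 0 < x → x ≤ y → Real.log y - Real.log x ≤ (y - x) / x := by
    intro x y hx hxy
    have hy : 0 < y := lt_of_lt_of_le hx hxy
    rw [← Real.log_div (ne_of_gt hy) (ne_of_gt hx)]
    calc Real.log (y / x) ≤ y / x - 1 := Real.log_le_sub_one_of_pos (div_pos hy hx)
      _ = (y - x) / x := by field_simp
  have h3 : |L₁ - L₂| ≤ d / (ε + m) := by
    rcases le_total r₁ r₂ with h | h
    · have hmr : m = r₁ := min_eq_left h
      have hL : L₁ ≤ L₂ := Real.log_le_log he₁ (by linarith)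
      have key := hlog (ε + r₁) (ε + r₂) he₁ (by linarith)
      have key' : L₂ - L₁ ≤ (r₂ - r₁) / (ε + r₁) := by
        have : (ε + r₂ - (ε + r₁)) = r₂ - r₁ := by ring
        rw [this] at key; exact key
      have hnum : r₂ - r₁ ≤ d := le_trans (by rw [abs_sub_comm] at hrd; exact le_abs_self _ |>.trans hrd) le_rfl
      rw [abs_sub_comm, abs_of_nonneg (by linarith), hmr]
      exact le_trans key' (by gcongr)
    · have hmr : m = r₂ := min_eq_right h
      have hL : L₂ ≤ L₁ := Real.log_le_log he₂ (by linarith)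
      have key := hlog (ε + r₂) (ε + r₁) he₂ (by linarith)
      have key' : L₁ - L₂ ≤ (r₁ - r₂) / (ε + r₂) := by
        have : (ε + r₁ - (ε + r₂)) = r₁ - r₂ := by ring
        rw [this] at key; exact key
      have hnum : r₁ - r₂ ≤ d := le_trans (le_abs_self _) hrd
      rw [abs_of_nonneg (by linarith), hmr]
      exact le_trans key' (by gcongr)
  -- Combine
  calc |2 * (L₂ - L₁) * (z₁ * starRingEnd ℂ z₂).im|
      = 2 * |L₁ - L₂| * |(z₁ * starRingEnd ℂ z₂).im| := by
        rw [abs_mul, abs_mul, abs_sub_comm L₁ L₂]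
        norm_num
    _ ≤ 2 * (d / (ε + m)) * (d * m) := by
        apply mul_le_mul _ h2 (abs_nonneg _) (by positivity)
        gcongr
    _ = 2 * d ^ 2 * (m / (ε + m)) := by field_simp
    _ ≤ 2 * d ^ 2 := by
        have hq : m / (ε + m) ≤ 1 := div_le_one_of_le₀ (by linarith) hem.le
        nlinarith [sq_nonneg d]
end

section
/- Let ε > 0 and τ ≥ 0. For all z₁, z₂ ∈ ℂ, |z₁·exp(−2iτ·ln(ε + |z₁|)) − z₂·exp(−2iτ·ln(ε + |z₂|))| ≤ (1 + 2τ)·|z₁ − z₂|. -/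
open Complex

lemma exp_I_lip (s t : ℝ) :
    ‖Complex.exp (s * Complex.I) - Complex.exp (t * Complex.I)‖ ≤ |s - t| := by
  have hderiv : ∀ x : ℝ, x ∈ Set.univ →
      HasDerivWithinAt (fun y : ℝ => Complex.exp (y * Complex.I))
        (Complex.exp (x * Complex.I) * Complex.I) Set.univ x := by
    intro x _
    have h1 : HasDerivAt (fun y : ℝ => (y : ℂ) * Complex.I) Complex.I x := by
      simpa using (Complex.ofRealCLM.hasDerivAt (x := x)).mul_const Complex.I
    have h2 : HasDerivAt (fun y : ℝ => Complex.exp ((y : ℂ) * Complex.I))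
        (Complex.exp (x * Complex.I) * Complex.I) x := by
      exact (Complex.hasDerivAt_exp (x * Complex.I)).comp x h1
    exact h2.hasDerivWithinAt
  have hbound : ∀ x : ℝ, x ∈ Set.univ → ‖Complex.exp (x * Complex.I) * Complex.I‖ ≤ 1 := by
    intro x _
    simp [Complex.norm_exp_ofReal_mul_I]
  have := convex_univ.norm_image_sub_le_of_norm_hasDerivWithin_le hderiv hbound
    (Set.mem_univ t) (Set.mem_univ s)
  simpa [Real.norm_eq_abs] using this

lemma key (ε τ : ℝ) (hε : 0 < ε) (hτ : 0 ≤ τ) (z₁ z₂ : ℂ)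
    (hle : ‖z₂‖ ≤ ‖z₁‖) :
    ‖z₁ * Complex.exp (-2 * Complex.I * τ * (Real.log (ε + ‖z₁‖) : ℂ))
        - z₂ * Complex.exp (-2 * Complex.I * τ * (Real.log (ε + ‖z₂‖) : ℂ))‖
      ≤ (1 + 2 * τ) * ‖z₁ - z₂‖ := by
  set r₁ := ‖z₁‖ with hr₁
  set r₂ := ‖z₂‖ with hr₂
  have hr₂0 : 0 ≤ r₂ := norm_nonneg _
  have hp₂ : 0 < ε + r₂ := by positivity
  have hp₁ : 0 < ε + r₁ := by positivity
  set L₁ := Real.log (ε + r₁) with hL₁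
  set L₂ := Real.log (ε + r₂) with hL₂
  have hexp₁ : (-2 * Complex.I * τ * (L₁ : ℂ)) = ((-2 * τ * L₁ : ℝ) : ℂ) * Complex.I := by
    push_cast; ring
  have hexp₂ : (-2 * Complex.I * τ * (L₂ : ℂ)) = ((-2 * τ * L₂ : ℝ) : ℂ) * Complex.I := by
    push_cast; ring
  set E₁ := Complex.exp (((-2 * τ * L₁ : ℝ) : ℂ) * Complex.I) with hE₁
  set E₂ := Complex.exp (((-2 * τ * L₂ : ℝ) : ℂ) * Complex.I) with hE₂
  rw [hexp₁, hexp₂]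
  have hdecomp : z₁ * E₁ - z₂ * E₂ = (z₁ - z₂) * E₁ + z₂ * (E₁ - E₂) := by ring
  rw [hdecomp]
  have habsE₁ : ‖E₁‖ = 1 := Complex.norm_exp_ofReal_mul_I _
  have hlog : L₁ - L₂ ≤ (r₁ - r₂) / (ε + r₂) := by
    have h1 : L₁ - L₂ = Real.log ((ε + r₁) / (ε + r₂)) := by
      rw [Real.log_div (ne_of_gt hp₁) (ne_of_gt hp₂)]
    have h2 := Real.log_le_sub_one_of_pos (div_pos hp₁ hp₂)
    rw [h1]
    calc Real.log ((ε + r₁) / (ε + r₂)) ≤ (ε + r₁) / (ε + r₂) - 1 := h2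
      _ = (r₁ - r₂) / (ε + r₂) := by field_simp; ring
  have hlog0 : 0 ≤ L₁ - L₂ := by
    have : L₂ ≤ L₁ := by
      apply Real.log_le_log hp₂
      linarith
    linarith
  have hEdiff : ‖E₁ - E₂‖ ≤ 2 * τ * (L₁ - L₂) := by
    have := exp_I_lip (-2 * τ * L₁) (-2 * τ * L₂)
    calc ‖E₁ - E₂‖ ≤ |(-2 * τ * L₁) - (-2 * τ * L₂)| := this
      _ = 2 * τ * (L₁ - L₂) := by
          rw [abs_of_nonpos (by nlinarith)]; ring
  have hrr : r₁ - r₂ ≤ ‖z₁ - z₂‖ := by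
    have h := norm_sub_norm_le z₁ z₂
    exact h
  have hterm2 : r₂ * ‖E₁ - E₂‖ ≤ 2 * τ * ‖z₁ - z₂‖ := by
    calc r₂ * ‖E₁ - E₂‖ ≤ r₂ * (2 * τ * (L₁ - L₂)) := by
          exact mul_le_mul_of_nonneg_left hEdiff hr₂0
      _ ≤ r₂ * (2 * τ * ((r₁ - r₂) / (ε + r₂))) := by
          apply mul_le_mul_of_nonneg_left _ hr₂0
          exact mul_le_mul_of_nonneg_left hlog (by positivity)
      _ = 2 * τ * (r₂ / (ε + r₂)) * (r₁ - r₂) := by field_simp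
      _ ≤ 2 * τ * 1 * (r₁ - r₂) := by
          apply mul_le_mul_of_nonneg_right _ (by linarith)
          apply mul_le_mul_of_nonneg_left _ (by positivity)
          rw [div_le_one hp₂]; linarith
      _ = 2 * τ * (r₁ - r₂) := by ring
      _ ≤ 2 * τ * ‖z₁ - z₂‖ := by
          exact mul_le_mul_of_nonneg_left hrr (by positivity)
  calc ‖(z₁ - z₂) * E₁ + z₂ * (E₁ - E₂)‖
      ≤ ‖(z₁ - z₂) * E₁‖ + ‖z₂ * (E₁ - E₂)‖ :=
        norm_add_le _ _
    _ = ‖z₁ - z₂‖ + r₂ * ‖E₁ - E₂‖ := by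
        rw [norm_mul, norm_mul, habsE₁, mul_one, hr₂]
    _ ≤ ‖z₁ - z₂‖ + 2 * τ * ‖z₁ - z₂‖ := by linarith
    _ = (1 + 2 * τ) * ‖z₁ - z₂‖ := by ring

theorem stmt_1 (ε τ : ℝ) (hε : 0 < ε) (hτ : 0 ≤ τ) (z₁ z₂ : ℂ) :
    ‖(z₁ * Complex.exp (-2 * Complex.I * τ * (Real.log (ε + ‖z₁‖) : ℂ))
        - z₂ * Complex.exp (-2 * Complex.I * τ * (Real.log (ε + ‖z₂‖) : ℂ)))‖
      ≤ (1 + 2 * τ) * ‖(z₁ - z₂)‖ := by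
  rcases le_total (‖z₂‖) (‖z₁‖) with h | h
  · exact key ε τ hε hτ z₁ z₂ h
  · have := key ε τ hε hτ z₂ z₁ h
    rw [norm_sub_rev] at this
    rw [norm_sub_rev z₂ z₁] at this
    exact this
end

section
/- Let (α, μ) be a measure space, ε > 0, τ ≥ 0, and let f, g : α → ℂ be strongly measurable. Then the L²(μ)-norm of the function x ↦ f(x)·exp(−2iτ·ln(ε + |f(x)|)) − g(x)·exp(−2iτ·ln(ε + |g(x)|)) is at most (1 + 2τ) times the L²(μ)-norm of f − g. -/
open MeasureTheory

private lemma lip_exp_I : LipschitzWith 1 (fun t : ℝ => Complex.exp (↑t * Complex.I)) := by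
  have hder : ∀ t : ℝ, HasDerivAt (fun y : ℝ => Complex.exp (↑y * Complex.I))
      (Complex.exp (↑t * Complex.I) * Complex.I) t := by
    intro t
    have h : HasDerivAt (fun z : ℂ => Complex.exp (z * Complex.I))
        (Complex.exp ((t : ℂ) * Complex.I) * Complex.I) (t : ℂ) := by
      simpa using ((hasDerivAt_id ((t : ℝ) : ℂ)).mul_const Complex.I).cexp
    exact h.comp_ofReal
  apply lipschitzWith_of_nnnorm_deriv_le (fun t => (hder t).differentiableAt)
  intro t
  rw [(hder t).deriv]
  refine le_of_eq ?_
  ext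
  rw [coe_nnnorm, norm_mul, Complex.norm_exp,
    Complex.norm_I]
  simp

private lemma abs_exp_I_sub_exp_I (a b : ℝ) :
    ‖Complex.exp (↑a * Complex.I) - Complex.exp (↑b * Complex.I)‖ ≤ |a - b| := by
  have := lip_exp_I.dist_le_mul a b
  simpa [dist_eq_norm] using this

private lemma key_lip (ε τ : ℝ) (hε : 0 < ε) (hτ : 0 ≤ τ) (z w : ℂ)
    (hle : ‖w‖ ≤ ‖z‖) :
    ‖z * Complex.exp (-2 * Complex.I * τ * (Real.log (ε + ‖z‖) : ℂ))
      - w * Complex.exp (-2 * Complex.I * τ * (Real.log (ε + ‖w‖) : ℂ))‖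
      ≤ (1 + 2 * τ) * ‖z - w‖ := by
  set a := ‖z‖ with ha
  set b := ‖w‖ with hb
  have hb0 : 0 ≤ b := norm_nonneg w
  have hεb : 0 < ε + b := by linarith
  have hεa : 0 < ε + a := by linarith
  set θz : ℝ := -2 * τ * Real.log (ε + a) with hθz
  set θw : ℝ := -2 * τ * Real.log (ε + b) with hθw
  have hexpz : (-2 : ℂ) * Complex.I * τ * (Real.log (ε + a) : ℂ) = (θz : ℂ) * Complex.I := by
    push_cast [hθz]; ring
  have hexpw : (-2 : ℂ) * Complex.I * τ * (Real.log (ε + b) : ℂ) = (θw : ℂ) * Complex.I := by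
    push_cast [hθw]; ring
  rw [hexpz, hexpw]
  set Ez := Complex.exp ((θz : ℂ) * Complex.I) with hEz
  set Ew := Complex.exp ((θw : ℂ) * Complex.I) with hEw
  have hEznorm : ‖Ez‖ = 1 := by
    rw [hEz, Complex.norm_exp]; simp
  have hlogmono : Real.log (ε + b) ≤ Real.log (ε + a) := by
    apply Real.log_le_log hεb; linarith
  -- log bound
  have hlog : Real.log (ε + a) - Real.log (ε + b) ≤ (a - b) / (ε + b) := by
    rw [← Real.log_div hεa.ne' hεb.ne']
    have h1 : (ε + a) / (ε + b) - 1 = (a - b) / (ε + b) := by field_simp; ring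
    have := Real.log_le_sub_one_of_pos (div_pos hεa hεb)
    linarith
  have hbound : b * (Real.log (ε + a) - Real.log (ε + b)) ≤ a - b := by
    have h1 : b * (Real.log (ε + a) - Real.log (ε + b)) ≤ b * ((a - b) / (ε + b)) :=
      mul_le_mul_of_nonneg_left hlog hb0
    have h2 : b * ((a - b) / (ε + b)) ≤ 1 * (a - b) := by
      rw [mul_div_assoc'] at *
      rw [div_le_iff₀ hεb, one_mul]
      nlinarith
    linarith
  have hdecomp : z * Ez - w * Ew = (z - w) * Ez + w * (Ez - Ew) := by ring
  rw [hdecomp]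
  have step1 : ‖(z - w) * Ez + w * (Ez - Ew)‖ ≤ ‖z - w‖ * ‖Ez‖ + ‖w‖ * ‖Ez - Ew‖ := by
    calc ‖(z - w) * Ez + w * (Ez - Ew)‖ ≤ ‖(z - w) * Ez‖ + ‖w * (Ez - Ew)‖ := norm_add_le _ _
    _ = ‖z - w‖ * ‖Ez‖ + ‖w‖ * ‖Ez - Ew‖ := by rw [norm_mul, norm_mul]
  have step2 : ‖Ez - Ew‖ ≤ |θz - θw| := abs_exp_I_sub_exp_I θz θw
  have hθdiff : |θz - θw| = 2 * τ * (Real.log (ε + a) - Real.log (ε + b)) := by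
    rw [hθz, hθw]
    rw [abs_of_nonpos (by nlinarith)]
    ring
  have hwnorm : ‖w‖ = b := rfl
  have hsub : a - b ≤ ‖z - w‖ := by
    have := norm_sub_norm_le z w
    simpa [ha, hb] using this
  have step3 : ‖w‖ * ‖Ez - Ew‖ ≤ 2 * τ * ‖z - w‖ := by
    calc ‖w‖ * ‖Ez - Ew‖ ≤ b * |θz - θw| := by
          rw [hwnorm]; exact mul_le_mul_of_nonneg_left step2 hb0
    _ = 2 * τ * (b * (Real.log (ε + a) - Real.log (ε + b))) := by rw [hθdiff]; ring
    _ ≤ 2 * τ * (a - b) := by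
          apply mul_le_mul_of_nonneg_left hbound; linarith
    _ ≤ 2 * τ * ‖z - w‖ := by
          apply mul_le_mul_of_nonneg_left hsub; linarith
  calc ‖(z - w) * Ez + w * (Ez - Ew)‖ ≤ ‖z - w‖ * ‖Ez‖ + ‖w‖ * ‖Ez - Ew‖ := step1
  _ = ‖z - w‖ + ‖w‖ * ‖Ez - Ew‖ := by rw [hEznorm, mul_one]
  _ ≤ ‖z - w‖ + 2 * τ * ‖z - w‖ := by linarith
  _ = (1 + 2 * τ) * ‖z - w‖ := by ring

private lemma key_lip' (ε τ : ℝ) (hε : 0 < ε) (hτ : 0 ≤ τ) (z w : ℂ) :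
    ‖z * Complex.exp (-2 * Complex.I * τ * (Real.log (ε + ‖z‖) : ℂ))
      - w * Complex.exp (-2 * Complex.I * τ * (Real.log (ε + ‖w‖) : ℂ))‖
      ≤ (1 + 2 * τ) * ‖z - w‖ := by
  rcases le_total (‖w‖) (‖z‖) with h | h
  · exact key_lip ε τ hε hτ z w h
  · have h0 := key_lip ε τ hε hτ w z h
    calc ‖_ - _‖ = ‖_ - _‖ := norm_sub_rev _ _
    _ ≤ (1 + 2 * τ) * ‖w - z‖ := h0
    _ = (1 + 2 * τ) * ‖z - w‖ := by rw [norm_sub_rev]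

theorem stmt_2 {α : Type*} [MeasurableSpace α] (μ : Measure α)
    (ε τ : ℝ) (hε : 0 < ε) (hτ : 0 ≤ τ) (f g : α → ℂ)
    (hf : StronglyMeasurable f) (hg : StronglyMeasurable g) :
    eLpNorm (fun x =>
        f x * Complex.exp (-2 * Complex.I * τ * (Real.log (ε + ‖f x‖) : ℂ))
        - g x * Complex.exp (-2 * Complex.I * τ * (Real.log (ε + ‖g x‖) : ℂ))) 2 μ
      ≤ ENNReal.ofReal (1 + 2 * τ) * eLpNorm (f - g) 2 μ := by
  have h1 : eLpNorm (fun x =>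
        f x * Complex.exp (-2 * Complex.I * τ * (Real.log (ε + ‖f x‖) : ℂ))
        - g x * Complex.exp (-2 * Complex.I * τ * (Real.log (ε + ‖g x‖) : ℂ))) 2 μ
      ≤ eLpNorm ((1 + 2 * τ) • (f - g)) 2 μ := by
    apply eLpNorm_mono
    intro x
    have := key_lip' ε τ hε hτ (f x) (g x)
    simp only [Pi.smul_apply, Pi.sub_apply, norm_smul, Real.norm_eq_abs,
      abs_of_nonneg (by linarith : (0:ℝ) ≤ 1 + 2 * τ)]
    exact this
  have h2 : eLpNorm ((1 + 2 * τ) • (f - g)) 2 μ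
      = ENNReal.ofReal (1 + 2 * τ) * eLpNorm (f - g) 2 μ := by
    rw [eLpNorm_const_smul]
    congr 1
    rw [← Real.enorm_eq_ofReal (by linarith : (0:ℝ) ≤ 1 + 2 * τ)]
  exact h1.trans h2.le
end

section
/- Let ε > 0 and define φ^ε(z) = 2z·ln(ε + |z|) for z ∈ ℂ. Then for all z₁, z₂ ∈ ℂ, |φ^ε(z₁) − φ^ε(z₂)| ≤ 2·(1 + max(|ln(ε + |z₁|)|, |ln(ε + |z₂|)|))·|z₁ − z₂|. -/
lemma stmt_3_aux (ε : ℝ) (hε : 0 < ε) (z₁ z₂ : ℂ)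
    (h : ‖z₂‖ ≤ ‖z₁‖) :
    ‖2 * z₁ * (Real.log (ε + ‖z₁‖) : ℂ)
        - 2 * z₂ * (Real.log (ε + ‖z₂‖) : ℂ)‖
      ≤ 2 * (1 + max |Real.log (ε + ‖z₁‖)| |Real.log (ε + ‖z₂‖)|)
        * ‖z₁ - z₂‖ := by
  set a := ε + ‖z₁‖ with ha_def
  set b := ε + ‖z₂‖ with hb_def
  have hb : 0 < b := by positivity
  have ha : 0 < a := by positivity
  have hba : b ≤ a := by simpa [ha_def, hb_def] using h
  set L₁ := Real.log a with hL1
  set L₂ := Real.log b with hL2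
  set d := ‖z₁ - z₂‖ with hd
  have hd0 : 0 ≤ d := norm_nonneg _
  have hlognn : 0 ≤ L₁ - L₂ := by
    have := Real.log_le_log hb hba
    linarith
  have hlog : L₁ - L₂ ≤ (a - b) / b := by
    have h1 : Real.log (a / b) ≤ a / b - 1 := Real.log_le_sub_one_of_pos (by positivity)
    have h2 : Real.log (a / b) = L₁ - L₂ := Real.log_div ha.ne' hb.ne'
    have h3 : a / b - 1 = (a - b) / b := by field_simp
    linarith [h1, h2 ▸ h1, h3]
  have hsub : ‖z₁‖ - ‖z₂‖ ≤ d := by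
    simpa [hd] using norm_sub_norm_le z₁ z₂
  have key : ‖z₂‖ * (L₁ - L₂) ≤ d := by
    have h1 : ‖z₂‖ * (L₁ - L₂) ≤ ‖z₂‖ * ((a - b) / b) :=
      mul_le_mul_of_nonneg_left hlog (norm_nonneg _)
    have h2 : ‖z₂‖ * ((a - b) / b) ≤ a - b := by
      rw [mul_div_assoc']
      rw [div_le_iff₀ hb]
      have : ‖z₂‖ ≤ b := by
        simp [hb_def]; linarith [hε]
      nlinarith [norm_nonneg z₂, sub_nonneg.mpr hba]
    have h3 : a - b = ‖z₁‖ - ‖z₂‖ := by simp [ha_def, hb_def]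
    linarith
  have decomp : 2 * z₁ * (L₁ : ℂ) - 2 * z₂ * (L₂ : ℂ)
      = 2 * (z₁ - z₂) * (L₁ : ℂ) + 2 * z₂ * ((L₁ - L₂ : ℝ) : ℂ) := by
    push_cast; ring
  calc ‖2 * z₁ * (L₁ : ℂ) - 2 * z₂ * (L₂ : ℂ)‖
      ≤ ‖2 * (z₁ - z₂) * (L₁ : ℂ)‖ + ‖2 * z₂ * ((L₁ - L₂ : ℝ) : ℂ)‖ := by
        rw [decomp]; exact norm_add_le _ _
    _ = 2 * |L₁| * d + 2 * (‖z₂‖ * |L₁ - L₂|) := by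
        rw [norm_mul, norm_mul, norm_mul, norm_mul, Complex.norm_two, Complex.norm_real, Complex.norm_real, Real.norm_eq_abs, Real.norm_eq_abs]; ring
    _ ≤ 2 * max |L₁| |L₂| * d + 2 * d := by
        have h1 : 2 * |L₁| * d ≤ 2 * max |L₁| |L₂| * d := by
          have := le_max_left |L₁| |L₂|
          nlinarith
        have h2 : ‖z₂‖ * |L₁ - L₂| ≤ d := by
          rwa [abs_of_nonneg hlognn]
        linarith
    _ ≤ 2 * (1 + max |L₁| |L₂|) * d := by ring_nf; linarith
  
theorem stmt_3 (ε : ℝ) (hε : 0 < ε) (z₁ z₂ : ℂ) :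
    ‖2 * z₁ * (Real.log (ε + ‖z₁‖) : ℂ)
        - 2 * z₂ * (Real.log (ε + ‖z₂‖) : ℂ)‖
      ≤ 2 * (1 + max |Real.log (ε + ‖z₁‖)| |Real.log (ε + ‖z₂‖)|)
        * ‖z₁ - z₂‖ := by
  rcases le_total (‖z₂‖) (‖z₁‖) with h | h
  · exact stmt_3_aux ε hε z₁ z₂ h
  · have := stmt_3_aux ε hε z₂ z₁ h
    have e1 : ‖2 * z₁ * (Real.log (ε + ‖z₁‖) : ℂ)
        - 2 * z₂ * (Real.log (ε + ‖z₂‖) : ℂ)‖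
        = ‖2 * z₂ * (Real.log (ε + ‖z₂‖) : ℂ)
        - 2 * z₁ * (Real.log (ε + ‖z₁‖) : ℂ)‖ := by
      rw [← norm_neg]; ring_nf
    have e2 : ‖z₁ - z₂‖ = ‖z₂ - z₁‖ := by
      rw [← norm_neg]; ring_nf
    rw [e1, e2, max_comm]
    exact this
end

section
/- Let ε > 0, t ≥ 0, d ∈ ℕ, and let ω₀ : ℝ^d → ℂ be differentiable at a point x with ω₀(x) ≠ 0. Then the function w(y) = ω₀(y)·exp(−2it·ln(ε + |ω₀(y)|)) is differentiable at x and the operator norm of its (real Fréchet) derivative satisfies ‖Dw(x)‖ ≤ (1 + 2t)·‖Dω₀(x)‖. -/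
set_option maxHeartbeats 1000000

theorem stmt_4 (ε t : ℝ) (hε : 0 < ε) (ht : 0 ≤ t) (d : ℕ)
    (ω₀ : EuclideanSpace ℝ (Fin d) → ℂ) (x : EuclideanSpace ℝ (Fin d))
    (hdiff : DifferentiableAt ℝ ω₀ x) (hne : ω₀ x ≠ 0) :
    DifferentiableAt ℝ
      (fun y => ω₀ y *
        Complex.exp (-2 * Complex.I * t * (Real.log (ε + ‖ω₀ y‖) : ℂ))) x ∧
    ‖fderiv ℝ
      (fun y => ω₀ y *
        Complex.exp (-2 * Complex.I * t * (Real.log (ε + ‖ω₀ y‖) : ℂ))) x‖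
      ≤ (1 + 2 * t) * ‖fderiv ℝ ω₀ x‖ := by
  have hεn : (0:ℝ) < ε + ‖ω₀ x‖ := by positivity
  have hA := hdiff.hasFDerivAt
  set A := fderiv ℝ ω₀ x with hAdef
  have hnd : DifferentiableAt ℝ (norm : ℂ → ℝ) (ω₀ x) :=
    (contDiffAt_norm ℂ hne (n := 1)).differentiableAt one_ne_zero
  set C := fderiv ℝ (norm : ℂ → ℝ) (ω₀ x) with hCdef
  have hC : HasFDerivAt (norm : ℂ → ℝ) C (ω₀ x) := hnd.hasFDerivAt
  have hCnorm : ‖C‖ ≤ 1 := by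
    apply hC.le_of_lip' zero_le_one
    filter_upwards with y
    simpa using abs_norm_sub_norm_le y (ω₀ x)
  have hn : HasFDerivAt (fun y => ‖ω₀ y‖) (C.comp A) x := hC.comp x hA
  have hεnd : HasFDerivAt (fun y => ε + ‖ω₀ y‖) (C.comp A) x := by
    exact hn.const_add ε
  set B : EuclideanSpace ℝ (Fin d) →L[ℝ] ℝ := (ε + ‖ω₀ x‖)⁻¹ • (C.comp A) with hBdef
  have hlog : HasFDerivAt (fun y => Real.log (ε + ‖ω₀ y‖)) B x := hεnd.log hεn.ne'
  have hor : HasFDerivAt (fun y => ((Real.log (ε + ‖ω₀ y‖) : ℝ) : ℂ))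
      (Complex.ofRealCLM.comp B) x := Complex.ofRealCLM.hasFDerivAt.comp x hlog
  set c : ℂ := -2 * Complex.I * t with hcdef
  set M : EuclideanSpace ℝ (Fin d) →L[ℝ] ℂ := c • (Complex.ofRealCLM.comp B) with hMdef
  have hmul : HasFDerivAt (fun y => c * ((Real.log (ε + ‖ω₀ y‖) : ℝ) : ℂ)) M x :=
    hor.const_mul c
  set Ex : ℂ := Complex.exp (c * ((Real.log (ε + ‖ω₀ x‖) : ℝ) : ℂ)) with hExdef
  have hexp : HasFDerivAt (fun y => Complex.exp (c * ((Real.log (ε + ‖ω₀ y‖) : ℝ) : ℂ)))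
      (Ex • M) x := hmul.cexp
  have hW : HasFDerivAt
      (fun y => ω₀ y * Complex.exp (c * ((Real.log (ε + ‖ω₀ y‖) : ℝ) : ℂ)))
      (ω₀ x • (Ex • M) + Ex • A) x := hA.mul hexp
  have hW' : HasFDerivAt
      (fun y => ω₀ y *
        Complex.exp (-2 * Complex.I * t * (Real.log (ε + ‖ω₀ y‖) : ℂ)))
      (ω₀ x • (Ex • M) + Ex • A) x := by
    simpa only [← hcdef] using hW
  refine ⟨hW'.differentiableAt, ?_⟩
  rw [hW'.fderiv]
  have hEx1 : ‖Ex‖ = 1 := by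
    rw [hExdef, Complex.norm_exp]
    have h0 : (c * ((Real.log (ε + ‖ω₀ x‖) : ℝ) : ℂ)).re = 0 := by
      simp [hcdef, Complex.mul_re, Complex.mul_im]
    rw [h0, Real.exp_zero]
  have hcnorm : ‖c‖ = 2 * t := by
    rw [hcdef]
    simp [norm_mul, Complex.norm_I, Complex.norm_real, abs_of_nonneg ht]
  refine ContinuousLinearMap.opNorm_le_bound _ (by positivity) fun v => ?_
  have hAv : ‖A v‖ ≤ ‖A‖ * ‖v‖ := A.le_opNorm v
  have hBv : |B v| ≤ (ε + ‖ω₀ x‖)⁻¹ * ‖A v‖ := by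
    rw [hBdef]
    simp only [ContinuousLinearMap.smul_apply, ContinuousLinearMap.coe_comp', Function.comp_apply,
      smul_eq_mul, abs_mul, abs_of_nonneg (inv_nonneg.2 hεn.le)]
    gcongr
    calc |C (A v)| = ‖C (A v)‖ := rfl
      _ ≤ ‖C‖ * ‖A v‖ := C.le_opNorm _
      _ ≤ 1 * ‖A v‖ := by gcongr
      _ = ‖A v‖ := one_mul _
  have expand : (ω₀ x • (Ex • M) + Ex • A) v
      = ω₀ x * (Ex * (c * ((B v : ℝ) : ℂ))) + Ex * A v := by
    simp [hMdef, ContinuousLinearMap.smul_apply, ContinuousLinearMap.coe_comp',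
      Function.comp_apply, smul_eq_mul, mul_assoc]
  have hmm : ‖ω₀ x‖ * (ε + ‖ω₀ x‖)⁻¹ ≤ 1 := by
    rw [← div_eq_mul_inv, div_le_one hεn]
    linarith [norm_nonneg (ω₀ x)]
  calc ‖(ω₀ x • (Ex • M) + Ex • A) v‖
      ≤ ‖ω₀ x * (Ex * (c * ((B v : ℝ) : ℂ)))‖ + ‖Ex * A v‖ := by
        rw [expand]; exact norm_add_le _ _
    _ = ‖ω₀ x‖ * (‖Ex‖ * (‖c‖ * |B v|)) + ‖Ex‖ * ‖A v‖ := by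
        simp [norm_mul, Complex.norm_real]
    _ = ‖ω₀ x‖ * ((2 * t) * |B v|) + ‖A v‖ := by rw [hEx1, hcnorm]; ring
    _ ≤ (1 + 2 * t) * ‖A v‖ := by
        nlinarith [mul_le_mul_of_nonneg_left hBv (by positivity : (0:ℝ) ≤ ‖ω₀ x‖ * (2 * t)),
          mul_le_mul_of_nonneg_right hmm
            (by positivity : (0:ℝ) ≤ 2 * t * ‖A v‖),
          norm_nonneg (A v), abs_nonneg (B v), norm_nonneg (ω₀ x)]
    _ ≤ (1 + 2 * t) * (‖A‖ * ‖v‖) := by gcongr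
    _ = (1 + 2 * t) * ‖A‖ * ‖v‖ := by ring
end

section
/- Let d ∈ ℕ, let ω₀ : ℝ^d → ℂ be twice continuously differentiable on a neighborhood of a point x with ω₀(x) ≠ 0, and let e_j, e_k be the j-th and k-th standard basis vectors of ℝ^d. Then the modulus function y ↦ |ω₀(y)| is twice differentiable at x and its second partial derivative satisfies |∂_k ∂_j |ω₀|(x)| ≤ |∂_k ∂_j ω₀(x)| + (2/|ω₀(x)|)·|∂_j ω₀(x)|·|∂_k ω₀(x)|. -/
open Topology

theorem myNormDeriv {E : Type*} [NormedAddCommGroup E] [NormedSpace ℝ E]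
    {f : E → ℂ} {f' : E →L[ℝ] ℂ} {y : E} (hf : HasFDerivAt f f' y) (h0 : f y ≠ 0) :
    HasFDerivAt (fun z => ‖f z‖) (‖f y‖⁻¹ • ((innerSL ℝ (f y)).comp f')) y := by
  have h1 : (‖f y‖ ^ 2) ≠ 0 := pow_ne_zero _ (norm_ne_zero_iff.2 h0)
  have hs := (Real.hasDerivAt_sqrt h1).comp_hasFDerivAt y hf.norm_sq
  simp only [Function.comp_def] at hs
  have he : (fun z => Real.sqrt (‖f z‖ ^ 2)) = fun z => ‖f z‖ := by
    funext z; rw [Real.sqrt_sq (norm_nonneg _)]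
  rw [he] at hs
  refine hs.congr_fderiv ?_
  ext v
  have hn : ‖f y‖ ≠ 0 := norm_ne_zero_iff.2 h0
  simp only [ContinuousLinearMap.smul_apply, ContinuousLinearMap.coe_smul',
    Pi.smul_apply, Real.sqrt_sq (norm_nonneg (f y)), smul_eq_mul]
  field_simp
  ring

theorem stmt_5 (d : ℕ) (ω₀ : EuclideanSpace ℝ (Fin d) → ℂ)
    (x : EuclideanSpace ℝ (Fin d)) (j k : Fin d)
    (hreg : ContDiffAt ℝ 2 ω₀ x) (hne : ω₀ x ≠ 0) :
    DifferentiableAt ℝ (fun y => Norm.norm (ω₀ y)) x ∧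
    DifferentiableAt ℝ
      (fun y => fderiv ℝ (fun z => Norm.norm (ω₀ z)) y (EuclideanSpace.single j 1)) x ∧
    |fderiv ℝ (fun y => fderiv ℝ (fun z => Norm.norm (ω₀ z)) y (EuclideanSpace.single j 1)) x
        (EuclideanSpace.single k 1)|
      ≤ Norm.norm (fderiv ℝ (fun y => fderiv ℝ ω₀ y (EuclideanSpace.single j 1)) x
            (EuclideanSpace.single k 1))
        + (2 / Norm.norm (ω₀ x)) *
          (Norm.norm (fderiv ℝ ω₀ x (EuclideanSpace.single j 1)) *
            Norm.norm (fderiv ℝ ω₀ x (EuclideanSpace.single k 1))) := by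
  set ej := EuclideanSpace.single j (1:ℝ) with hej
  set ek := EuclideanSpace.single k (1:ℝ) with hek
  have hr0 : (0:ℝ) < ‖ω₀ x‖ := norm_pos_iff.2 hne
  have hdx : DifferentiableAt ℝ ω₀ x := hreg.differentiableAt (by norm_num)
  have part1 : DifferentiableAt ℝ (fun y => ‖ω₀ y‖) x :=
    (myNormDeriv hdx.hasFDerivAt hne).differentiableAt
  refine ⟨part1, ?_⟩
  have hev : ∀ᶠ y in 𝓝 x, ContDiffAt ℝ 2 ω₀ y := hreg.eventually (by norm_num)
  have hne_ev : ∀ᶠ y in 𝓝 x, ω₀ y ≠ 0 := hreg.continuousAt.eventually_ne hne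
  have key : ∀ᶠ y in 𝓝 x, HasFDerivAt (fun z => ‖ω₀ z‖)
      (‖ω₀ y‖⁻¹ • ((innerSL ℝ (ω₀ y)).comp (fderiv ℝ ω₀ y))) y := by
    filter_upwards [hev, hne_ev] with y hy hy0
    exact myNormDeriv (hy.differentiableAt (by norm_num)).hasFDerivAt hy0
  have hgg : (fun y => fderiv ℝ (fun z => ‖ω₀ z‖) y ej) =ᶠ[𝓝 x]
      (fun y => (‖ω₀ y‖)⁻¹ * (@inner ℝ ℂ _ (ω₀ y) (fderiv ℝ ω₀ y ej))) := by
    filter_upwards [key] with y hy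
    rw [hy.fderiv]
    simp
  have hD : ContDiffAt ℝ 1 (fderiv ℝ ω₀) x := hreg.fderiv_right (by norm_num)
  have hDj : DifferentiableAt ℝ (fun y => fderiv ℝ ω₀ y ej) x :=
    ((ContinuousLinearMap.apply ℝ ℂ ej).differentiable.differentiableAt).comp x
      (hD.differentiableAt one_ne_zero)
  have hu : DifferentiableAt ℝ (fun y => (@inner ℝ ℂ _ (ω₀ y) (fderiv ℝ ω₀ y ej))) x :=
    hdx.inner ℝ hDj
  -- derivative of the inverse norm
  have hinv : HasFDerivAt (fun y => (‖ω₀ y‖)⁻¹)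
      ((-ContinuousLinearMap.mulLeftRight ℝ ℝ (‖ω₀ x‖)⁻¹ (‖ω₀ x‖)⁻¹).comp
        ((‖ω₀ x‖)⁻¹ • ((innerSL ℝ (ω₀ x)).comp (fderiv ℝ ω₀ x)))) x := by
    have := (hasFDerivAt_inv' (𝕜 := ℝ) hr0.ne').comp x (myNormDeriv hdx.hasFDerivAt hne)
    simpa [Function.comp_def] using this
  have hφd : DifferentiableAt ℝ
      (fun y => (‖ω₀ y‖)⁻¹ * (@inner ℝ ℂ _ (ω₀ y) (fderiv ℝ ω₀ y ej))) x :=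
    hinv.differentiableAt.mul hu
  refine ⟨hφd.congr_of_eventuallyEq hgg, ?_⟩
  have hmul := (hinv.mul hu.hasFDerivAt).fderiv
  rw [hgg.fderiv_eq]
  erw [hmul]
  set r : ℝ := ‖ω₀ x‖
  set Dj : ℂ := fderiv ℝ ω₀ x ej with hDjdef
  set Dk : ℂ := fderiv ℝ ω₀ x ek with hDkdef
  set D2 : ℂ := fderiv ℝ (fun y => fderiv ℝ ω₀ y ej) x ek with hD2def
  have hfu : fderiv ℝ (fun y => (@inner ℝ ℂ _ (ω₀ y) (fderiv ℝ ω₀ y ej))) x ek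
      = (@inner ℝ ℂ _ (ω₀ x) D2) + (@inner ℝ ℂ _ Dk Dj) := fderiv_inner_apply ℝ hdx hDj ek
  set A := (@inner ℝ ℂ _ (ω₀ x) D2) with hA
  set B := (@inner ℝ ℂ _ Dk Dj) with hB
  set C := (@inner ℝ ℂ _ (ω₀ x) Dj) with hC
  set K := (@inner ℝ ℂ _ (ω₀ x) Dk) with hK
  have hval : (((fun y => (‖ω₀ y‖)⁻¹) x) •
        fderiv ℝ (fun y => (@inner ℝ ℂ _ (ω₀ y) (fderiv ℝ ω₀ y ej))) x +
      ((fun y => (@inner ℝ ℂ _ (ω₀ y) (fderiv ℝ ω₀ y ej))) x) •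
        ((-ContinuousLinearMap.mulLeftRight ℝ ℝ r⁻¹ r⁻¹).comp
          (r⁻¹ • ((innerSL ℝ (ω₀ x)).comp (fderiv ℝ ω₀ x))))) ek
      = r⁻¹ * (A + B) + C * (-(r⁻¹ * (r⁻¹ * K) * r⁻¹)) := by
    simp only [ContinuousLinearMap.add_apply, ContinuousLinearMap.coe_smul', Pi.smul_apply,
      ContinuousLinearMap.comp_apply, ContinuousLinearMap.smul_apply,
      ContinuousLinearMap.neg_apply, ContinuousLinearMap.mulLeftRight_apply, smul_eq_mul, hfu]
    ring_nf
    show r⁻¹ * A + r⁻¹ * B - C * r⁻¹ ^ 3 * K = _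
    ring
  rw [hval]
  -- arithmetic
  have hIA : |A| ≤ r * ‖D2‖ := abs_real_inner_le_norm _ _
  have hIB : |B| ≤ ‖Dk‖ * ‖Dj‖ := abs_real_inner_le_norm _ _
  have hIC : |C| ≤ r * ‖Dj‖ := abs_real_inner_le_norm _ _
  have hIK : |K| ≤ r * ‖Dk‖ := abs_real_inner_le_norm _ _
  have habs : |r⁻¹ * (A + B) + C * (-(r⁻¹ * (r⁻¹ * K) * r⁻¹))|
      ≤ r⁻¹ * (|A| + |B|) + |C| * (r⁻¹ * (r⁻¹ * |K|) * r⁻¹) := by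
    calc |r⁻¹ * (A + B) + C * (-(r⁻¹ * (r⁻¹ * K) * r⁻¹))|
        ≤ |r⁻¹ * (A + B)| + |C * (-(r⁻¹ * (r⁻¹ * K) * r⁻¹))| := abs_add_le _ _
      _ = r⁻¹ * |A + B| + |C| * (r⁻¹ * (r⁻¹ * |K|) * r⁻¹) := by
          rw [abs_mul, abs_mul, abs_neg, abs_mul, abs_mul, abs_mul,
            abs_of_pos (inv_pos.2 hr0)]
      _ ≤ r⁻¹ * (|A| + |B|) + |C| * (r⁻¹ * (r⁻¹ * |K|) * r⁻¹) := by
          gcongr; exact abs_add_le _ _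
  refine habs.trans ?_
  have h2 : r⁻¹ * (|A| + |B|) + |C| * (r⁻¹ * (r⁻¹ * |K|) * r⁻¹)
      ≤ r⁻¹ * ((r * ‖D2‖) + ‖Dk‖ * ‖Dj‖) + (r * ‖Dj‖) * (r⁻¹ * (r⁻¹ * (r * ‖Dk‖)) * r⁻¹) := by
    gcongr <;> positivity
  refine h2.trans (le_of_eq ?_)
  have hrne : r ≠ 0 := hr0.ne'
  field_simp
  ring
end

section
/- Let ε > 0, t ≥ 0, d ∈ ℕ, let ω₀ : ℝ^d → ℂ be twice continuously differentiable on a neighborhood of a point x with ω₀(x) ≠ 0, and let e_j, e_k be standard basis vectors of ℝ^d. Then the function w(y) = ω₀(y)·exp(−2it·ln(ε + |ω₀(y)|)) is twice differentiable at x and |∂_k ∂_j w(x)| ≤ (1 + 2t)·|∂_k ∂_j ω₀(x)| + ((10t + 4t²)/(ε + |ω₀(x)|))·|∂_j ω₀(x)|·|∂_k ω₀(x)|. -/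
open scoped RealInnerProductSpace

lemma norm_hasFDerivAt' {E : Type*} [NormedAddCommGroup E] [NormedSpace ℝ E]
    {f : E → ℂ} {f' : E →L[ℝ] ℂ} {y : E} (hf : HasFDerivAt f f' y) (h0 : f y ≠ 0) :
    HasFDerivAt (fun z => ‖f z‖) ((‖f y‖)⁻¹ • ((innerSL ℝ (f y)).comp f')) y := by
  have hm : (0:ℝ) < ‖f y‖ := norm_pos_iff.mpr h0
  have h1 := hf.norm_sq
  have h2 : HasDerivAt Real.sqrt (1 / (2 * Real.sqrt (‖f y‖ ^ 2))) (‖f y‖ ^ 2) :=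
    Real.hasDerivAt_sqrt (by positivity)
  have h3 := h2.comp_hasFDerivAt y h1
  have h4 : (Real.sqrt ∘ fun z => ‖f z‖ ^ 2) = fun z => ‖f z‖ := by
    funext z; simp [Real.sqrt_sq (norm_nonneg _)]
  rw [h4] at h3
  refine h3.congr_fderiv ?_
  ext h
  simp [Real.sqrt_sq (norm_nonneg _)]
  field_simp

set_option maxHeartbeats 2000000 in
theorem stmt_6 (ε t : ℝ) (hε : 0 < ε) (ht : 0 ≤ t) (d : ℕ)
    (ω₀ : EuclideanSpace ℝ (Fin d) → ℂ) (x : EuclideanSpace ℝ (Fin d))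
    (j k : Fin d) (hreg : ContDiffAt ℝ 2 ω₀ x) (hne : ω₀ x ≠ 0)
    (w : EuclideanSpace ℝ (Fin d) → ℂ)
    (hw : ∀ y, w y = ω₀ y *
        Complex.exp (-2 * Complex.I * t * (Real.log (ε + norm (ω₀ y)) : ℂ))) :
    DifferentiableAt ℝ w x ∧
    DifferentiableAt ℝ (fun y => fderiv ℝ w y (EuclideanSpace.single j 1)) x ∧
    norm (fderiv ℝ (fun y => fderiv ℝ w y (EuclideanSpace.single j 1)) x
        (EuclideanSpace.single k 1))
      ≤ (1 + 2 * t) *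
          norm (fderiv ℝ (fun y => fderiv ℝ ω₀ y (EuclideanSpace.single j 1)) x
            (EuclideanSpace.single k 1))
        + ((10 * t + 4 * t ^ 2) / (ε + norm (ω₀ x))) *
          (norm (fderiv ℝ ω₀ x (EuclideanSpace.single j 1)) *
            norm (fderiv ℝ ω₀ x (EuclideanSpace.single k 1))) := by
  set ej : EuclideanSpace ℝ (Fin d) := EuclideanSpace.single j 1 with hej
  set ek : EuclideanSpace ℝ (Fin d) := EuclideanSpace.single k 1 with hek
  set c : ℂ := -2 * Complex.I * t with hc
  set u : EuclideanSpace ℝ (Fin d) → ℂ := fun y => fderiv ℝ ω₀ y ej with hu_def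
  set g : EuclideanSpace ℝ (Fin d) → ℂ := fun y =>
    ω₀ y * (Complex.exp (c * (Real.log (ε + ‖ω₀ y‖) : ℂ)) *
      (c * (((ε + ‖ω₀ y‖)⁻¹ * ((‖ω₀ y‖)⁻¹ * (inner ℝ (ω₀ y) (u y) : ℝ))) : ℝ))) +
    Complex.exp (c * (Real.log (ε + ‖ω₀ y‖) : ℂ)) * u y with hg_def
  have hwe : w = fun z => ω₀ z *
      Complex.exp (c * (Real.log (ε + ‖ω₀ z‖) : ℂ)) := by
    funext z; rw [hw z]
  -- eventually: w differentiable with first derivative in direction ej equal to g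
  have hEv : ∀ᶠ y in nhds x, DifferentiableAt ℝ w y ∧ fderiv ℝ w y ej = g y := by
    have h1 : ∀ᶠ y in nhds x, ContDiffAt ℝ 2 ω₀ y := hreg.eventually (by norm_num)
    have h2 : ∀ᶠ y in nhds x, ω₀ y ≠ 0 := hreg.continuousAt.eventually_ne hne
    filter_upwards [h1, h2] with y hcd hy
    have hU : HasFDerivAt ω₀ (fderiv ℝ ω₀ y) y := (hcd.differentiableAt two_ne_zero).hasFDerivAt
    have hmY : (0:ℝ) < ‖ω₀ y‖ := norm_pos_iff.mpr hy
    have haY : (0:ℝ) < ε + ‖ω₀ y‖ := by positivity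
    have hn := norm_hasFDerivAt' hU hy
    have h3 := ((hn.const_add ε).log haY.ne')
    have h4 := Complex.ofRealCLM.hasFDerivAt.comp y h3
    have h5 := h4.const_mul c
    have h6 := h5.cexp
    have h7 := hU.mul h6
    simp only [Function.comp_def, Complex.ofRealCLM_apply, Pi.mul_def] at h7
    rw [← hwe] at h7
    refine ⟨h7.differentiableAt, ?_⟩
    rw [h7.fderiv]
    simp only [hg_def, ContinuousLinearMap.add_apply, ContinuousLinearMap.smul_apply,
      ContinuousLinearMap.comp_apply, Complex.ofRealCLM_apply, smul_eq_mul,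
      Complex.real_smul, innerSL_apply_apply, Function.comp_def, hu_def]
  have hEq : (fun y => fderiv ℝ w y ej) =ᶠ[nhds x] g := hEv.mono fun y hy => hy.2
  -- second derivative of g at x
  have hm : (0:ℝ) < ‖ω₀ x‖ := norm_pos_iff.mpr hne
  have ha : (0:ℝ) < ε + ‖ω₀ x‖ := by positivity
  have hV : HasFDerivAt ω₀ (fderiv ℝ ω₀ x) x :=
    (hreg.differentiableAt two_ne_zero).hasFDerivAt
  have hfd : ContDiffAt ℝ 1 (fderiv ℝ ω₀) x := hreg.fderiv_right (by norm_num)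
  have hQ0 : HasFDerivAt (fderiv ℝ ω₀) (fderiv ℝ (fderiv ℝ ω₀) x) x :=
    (hfd.differentiableAt one_ne_zero).hasFDerivAt
  have hu : HasFDerivAt u ((ContinuousLinearMap.apply ℝ ℂ ej).comp (fderiv ℝ (fderiv ℝ ω₀) x)) x :=
    ((ContinuousLinearMap.apply ℝ ℂ ej).hasFDerivAt.comp x hQ0)
  have hn : HasFDerivAt (fun y => ‖ω₀ y‖)
      ((‖ω₀ x‖)⁻¹ • ((innerSL ℝ (ω₀ x)).comp (fderiv ℝ ω₀ x))) x := norm_hasFDerivAt' hV hne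
  have han := hn.const_add ε
  have hinva := (hasDerivAt_inv ha.ne').comp_hasFDerivAt x han
  have hinvm := (hasDerivAt_inv hm.ne').comp_hasFDerivAt x hn
  have hinner := hV.inner (𝕜 := ℝ) hu
  have hB := hinva.mul (hinvm.mul hinner)
  have hoB := Complex.ofRealCLM.hasFDerivAt.comp x hB
  have hcB := hoB.const_mul c
  have hlog := (han.log ha.ne')
  have holog := Complex.ofRealCLM.hasFDerivAt.comp x hlog
  have hclog := holog.const_mul c
  have hA := hclog.cexp
  have hg' := (hV.mul (hA.mul hcB)).add (hA.mul hu)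
  have hgg : HasFDerivAt g _ x := hg'
  have hval := congrArg (fun (L : EuclideanSpace ℝ (Fin d) →L[ℝ] ℂ) => L ek) hgg.fderiv
  simp only [ContinuousLinearMap.add_apply, ContinuousLinearMap.smul_apply,
    ContinuousLinearMap.comp_apply, ContinuousLinearMap.prod_apply, fderivInnerCLM_apply,
    Complex.ofRealCLM_apply, ContinuousLinearMap.coe_smul', Pi.smul_apply,
    smul_eq_mul, Complex.real_smul, Complex.ofReal_mul, Complex.ofReal_neg,
    Complex.ofReal_inv, Complex.ofReal_add, Complex.ofReal_pow, Function.comp_def,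
    ContinuousLinearMap.apply_apply, neg_mul, neg_smul, ContinuousLinearMap.neg_apply,
    innerSL_apply_apply, Pi.mul_apply] at hval
  refine ⟨(hEv.self_of_nhds).1, hgg.differentiableAt.congr_of_eventuallyEq hEq, ?_⟩
  rw [hEq.fderiv_eq, hu.fderiv]
  simp only [ContinuousLinearMap.comp_apply, ContinuousLinearMap.apply_apply]
  clear hgg hg' hA hcB hoB hB hclog holog hlog hinner hinvm hinva han hn hu hQ0 hfd hV hEq hEv hwe hw
  -- abbreviations
  set m : ℝ := ‖ω₀ x‖ with hm_def
  set uu : ℂ := u x with huu_def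
  set vv : ℂ := fderiv ℝ ω₀ x ek with hvv_def
  set qq : ℂ := fderiv ℝ (fderiv ℝ ω₀) x ek ej with hqq_def
  set P : ℝ := (inner ℝ (ω₀ x) vv : ℝ) with hP_def
  set R : ℝ := (inner ℝ (ω₀ x) uu : ℝ) with hR_def
  set S1 : ℝ := (inner ℝ (ω₀ x) qq : ℝ) with hS1_def
  set S2 : ℝ := (inner ℝ vv uu : ℝ) with hS2_def
  set A : ℂ := Complex.exp (c * (Real.log (ε + m) : ℂ)) with hA_def
  set D2 : ℝ := (ε + m)⁻¹ * (m⁻¹*(S1+S2) - R * ((m^2)⁻¹ * (m⁻¹*P))) - m⁻¹*R*(((ε + m)^2)⁻¹*(m⁻¹*P)) with hD2_def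
  set BB : ℝ := (ε + m)⁻¹ * (m⁻¹ * R) with hBB_def
  set pp : ℝ := (ε + m)⁻¹ * (m⁻¹ * P) with hpp_def
  have hval2 : fderiv ℝ g x ek =
      A * (qq + c * (D2 : ℝ) * ω₀ x + c * c * (BB : ℝ) * (pp : ℝ) * ω₀ x
        + c * (BB : ℝ) * vv + c * (pp : ℝ) * uu) := by
    rw [hval, hD2_def, hBB_def, hpp_def]
    push_cast
    ring
  rw [show (fderiv ℝ ω₀ x) ej = uu from rfl, hval2]
  clear hval hval2
  clear_value m uu vv qq P R S1 S2 A D2 BB pp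
  -- norm facts
  have hA1 : ‖A‖ = 1 := by
    rw [hA_def, hc, Complex.norm_exp]
    norm_num [Complex.mul_re, Complex.mul_im, Complex.I_re, Complex.I_im,
      Complex.ofReal_re, Complex.ofReal_im, Real.exp_zero]
  have hcn : ‖c‖ = 2 * t := by
    rw [hc]
    simp [Complex.norm_I, Complex.norm_real, abs_of_nonneg ht]
  set a : ℝ := ε + m with ha_def
  have ha' : (0:ℝ) < a := ha
  have hma : m ≤ a := by rw [ha_def]; linarith
  clear_value a
  -- inner product bounds
  have hPb : |P| ≤ m * ‖vv‖ := by rw [hP_def, hm_def]; exact abs_real_inner_le_norm _ _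
  have hRb : |R| ≤ m * ‖uu‖ := by rw [hR_def, hm_def]; exact abs_real_inner_le_norm _ _
  have hS1b : |S1| ≤ m * ‖qq‖ := by rw [hS1_def, hm_def]; exact abs_real_inner_le_norm _ _
  have hS2b : |S2| ≤ ‖vv‖ * ‖uu‖ := by rw [hS2_def]; exact abs_real_inner_le_norm _ _
  have hBBb : |BB| ≤ ‖uu‖ / a := by
    rw [hBB_def, abs_mul, abs_mul, abs_inv, abs_inv, abs_of_pos ha', abs_of_pos hm]
    calc a⁻¹ * (m⁻¹ * |R|) ≤ a⁻¹ * (m⁻¹ * (m * ‖uu‖)) := by gcongr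
      _ = ‖uu‖ / a := by field_simp [hm.ne', ha'.ne']
  have hppb : |pp| ≤ ‖vv‖ / a := by
    rw [hpp_def, abs_mul, abs_mul, abs_inv, abs_inv, abs_of_pos ha', abs_of_pos hm]
    calc a⁻¹ * (m⁻¹ * |P|) ≤ a⁻¹ * (m⁻¹ * (m * ‖vv‖)) := by gcongr
      _ = ‖vv‖ / a := by field_simp [hm.ne', ha'.ne']
  have hT3 : |BB| * ‖vv‖ ≤ (‖uu‖ * ‖vv‖) / a := by
    calc |BB| * ‖vv‖ ≤ (‖uu‖ / a) * ‖vv‖ := by gcongr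
      _ = (‖uu‖ * ‖vv‖) / a := by ring
  have hT4 : |pp| * ‖uu‖ ≤ (‖uu‖ * ‖vv‖) / a := by
    calc |pp| * ‖uu‖ ≤ (‖vv‖ / a) * ‖uu‖ := by gcongr
      _ = (‖uu‖ * ‖vv‖) / a := by ring
  have hT2 : |BB| * |pp| * m ≤ (‖uu‖ * ‖vv‖) / a := by
    calc |BB| * |pp| * m ≤ (‖uu‖ / a) * (‖vv‖ / a) * m := by gcongr
      _ = (‖uu‖ * ‖vv‖) * m / (a * a) := by ring
      _ ≤ (‖uu‖ * ‖vv‖) / a := by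
          rw [div_le_div_iff₀ (mul_pos ha' ha') ha']
          nlinarith [mul_le_mul_of_nonneg_right
            (mul_le_mul_of_nonneg_left hma (mul_nonneg (norm_nonneg uu) (norm_nonneg vv))) ha'.le]
  have hT1 : |D2| * m ≤ ‖qq‖ + 3 * ((‖uu‖ * ‖vv‖) / a) := by
    have hd2eq : D2 = (S1 + S2) / (a * m) - R * P / (a * m ^ 3) - R * P / (a ^ 2 * m ^ 2) := by
      rw [hD2_def]
      field_simp [hm.ne', ha'.ne']
    have habs : |D2| ≤ (|S1| + |S2|) / (a * m) + |R| * |P| / (a * m ^ 3)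
        + |R| * |P| / (a ^ 2 * m ^ 2) := by
      rw [hd2eq]
      have A1 : |(S1 + S2) / (a * m)| ≤ (|S1| + |S2|) / (a * m) := by
        rw [abs_div, abs_of_pos (mul_pos ha' hm)]
        gcongr
        exact abs_add_le _ _
      have A2 : |R * P / (a * m ^ 3)| = |R| * |P| / (a * m ^ 3) := by
        rw [abs_div, abs_mul, abs_of_pos (mul_pos ha' (pow_pos hm 3))]
      have A3 : |R * P / (a ^ 2 * m ^ 2)| = |R| * |P| / (a ^ 2 * m ^ 2) := by
        rw [abs_div, abs_mul, abs_of_pos (mul_pos (pow_pos ha' 2) (pow_pos hm 2))]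
      calc |(S1 + S2) / (a * m) - R * P / (a * m ^ 3) - R * P / (a ^ 2 * m ^ 2)|
          ≤ |(S1 + S2) / (a * m) - R * P / (a * m ^ 3)| + |R * P / (a ^ 2 * m ^ 2)| :=
            abs_sub _ _
        _ ≤ |(S1 + S2) / (a * m)| + |R * P / (a * m ^ 3)| + |R * P / (a ^ 2 * m ^ 2)| := by
            have := abs_sub ((S1 + S2) / (a * m)) (R * P / (a * m ^ 3))
            linarith
        _ ≤ (|S1| + |S2|) / (a * m) + |R| * |P| / (a * m ^ 3) + |R| * |P| / (a ^ 2 * m ^ 2) := by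
            rw [A2, A3]; linarith
    calc |D2| * m
        ≤ ((|S1| + |S2|) / (a * m) + |R| * |P| / (a * m ^ 3) + |R| * |P| / (a ^ 2 * m ^ 2)) * m :=
          mul_le_mul_of_nonneg_right habs hm.le
      _ ≤ ((m * ‖qq‖ + ‖vv‖ * ‖uu‖) / (a * m) + (m * ‖uu‖) * (m * ‖vv‖) / (a * m ^ 3)
          + (m * ‖uu‖) * (m * ‖vv‖) / (a ^ 2 * m ^ 2)) * m := by
          gcongr <;> first
            | exact mul_pos ha' hm
            | exact mul_pos ha' (pow_pos hm 3)
            | exact mul_pos (pow_pos ha' 2) (pow_pos hm 2)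
            | linarith [hS1b, hS2b]
            | exact hRb
            | exact hPb
            | positivity
      _ = (m * ‖qq‖ + ‖vv‖ * ‖uu‖) / a + (‖uu‖ * ‖vv‖) / a + (‖uu‖ * ‖vv‖) * m / a ^ 2 := by
          field_simp
      _ ≤ ‖qq‖ + 3 * ((‖uu‖ * ‖vv‖) / a) := by
          have e1 : (m * ‖qq‖) / a ≤ ‖qq‖ := by
            rw [div_le_iff₀ ha']
            nlinarith [norm_nonneg qq, mul_le_mul_of_nonneg_left hma (norm_nonneg qq)]
          have e2 : (‖uu‖ * ‖vv‖) * m / a ^ 2 ≤ (‖uu‖ * ‖vv‖) / a := by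
            rw [div_le_div_iff₀ (pow_pos ha' 2) ha']
            nlinarith [mul_le_mul_of_nonneg_left hma
              (mul_nonneg (norm_nonneg uu) (norm_nonneg vv))]
          have e3 : ‖vv‖ * ‖uu‖ / a = ‖uu‖ * ‖vv‖ / a := by ring
          rw [add_div]
          linarith
  -- final assembly
  have hnormsplit : ‖A * (qq + c * (D2 : ℝ) * ω₀ x + c * c * (BB : ℝ) * (pp : ℝ) * ω₀ x
      + c * (BB : ℝ) * vv + c * (pp : ℝ) * uu)‖
      ≤ ‖qq‖ + (2*t) * |D2| * m + (2*t) * (2*t) * (|BB| * |pp| * m)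
        + (2*t) * (|BB| * ‖vv‖) + (2*t) * (|pp| * ‖uu‖) := by
    rw [norm_mul, hA1, one_mul]
    have step : ∀ z₁ z₂ z₃ z₄ z₅ : ℂ, ‖z₁ + z₂ + z₃ + z₄ + z₅‖
        ≤ ‖z₁‖ + ‖z₂‖ + ‖z₃‖ + ‖z₄‖ + ‖z₅‖ := by
      intro z₁ z₂ z₃ z₄ z₅
      calc ‖z₁ + z₂ + z₃ + z₄ + z₅‖ ≤ ‖z₁ + z₂ + z₃ + z₄‖ + ‖z₅‖ := norm_add_le _ _
        _ ≤ ‖z₁ + z₂ + z₃‖ + ‖z₄‖ + ‖z₅‖ := by linarith [norm_add_le (z₁ + z₂ + z₃) z₄]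
        _ ≤ ‖z₁ + z₂‖ + ‖z₃‖ + ‖z₄‖ + ‖z₅‖ := by linarith [norm_add_le (z₁ + z₂) z₃]
        _ ≤ ‖z₁‖ + ‖z₂‖ + ‖z₃‖ + ‖z₄‖ + ‖z₅‖ := by linarith [norm_add_le z₁ z₂]
    refine (step _ _ _ _ _).trans ?_
    have hzx : ‖ω₀ x‖ = m := hm_def.symm
    simp only [norm_mul, hcn, Complex.norm_real, Real.norm_eq_abs, hzx]
    ring_nf
    nlinarith [abs_nonneg D2, abs_nonneg BB, abs_nonneg pp, norm_nonneg uu, norm_nonneg vv]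
  refine hnormsplit.trans ?_
  have c1 := mul_le_mul_of_nonneg_left hT1 (by positivity : (0:ℝ) ≤ 2*t)
  have c2 := mul_le_mul_of_nonneg_left hT2 (by positivity : (0:ℝ) ≤ (2*t)*(2*t))
  have c3 := mul_le_mul_of_nonneg_left hT3 (by positivity : (0:ℝ) ≤ 2*t)
  have c4 := mul_le_mul_of_nonneg_left hT4 (by positivity : (0:ℝ) ≤ 2*t)
  have hfin : (10 * t + 4 * t ^ 2) / a * (‖uu‖ * ‖vv‖)
      = 10 * (t * ((‖uu‖ * ‖vv‖) / a)) + 4 * (t^2 * ((‖uu‖ * ‖vv‖) / a)) := by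
    field_simp [ha'.ne']
  nlinarith [c1, c2, c3, c4]
end

section
/- Let ε > 0, define φ^ε(z) = 2z·ln(ε + |z|) for z ∈ ℂ, let d ∈ ℕ, and let u : ℝ^d → ℂ be differentiable at a point x with u(x) ≠ 0. Then the composition y ↦ φ^ε(u(y)) is differentiable at x and the operator norm of its (real Fréchet) derivative satisfies ‖D(φ^ε ∘ u)(x)‖ ≤ 2·‖Du(x)‖·(1 + |ln(ε + |u(x)|)|). -/
theorem stmt_7 (ε : ℝ) (hε : 0 < ε) (d : ℕ)
    (u : EuclideanSpace ℝ (Fin d) → ℂ) (x : EuclideanSpace ℝ (Fin d))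
    (hdiff : DifferentiableAt ℝ u x) (hne : u x ≠ 0) :
    DifferentiableAt ℝ
      (fun y => 2 * u y * (Real.log (ε + ‖u y‖) : ℂ)) x ∧
    ‖fderiv ℝ (fun y => 2 * u y * (Real.log (ε + ‖u y‖) : ℂ)) x‖
      ≤ 2 * ‖fderiv ℝ u x‖ * (1 + |Real.log (ε + ‖u x‖)|) := by
  have hN : DifferentiableAt ℝ (fun y => ‖u y‖) x := hdiff.norm ℝ hne
  have hpos : 0 < ε + ‖u x‖ := by positivity
  have hA : DifferentiableAt ℝ (fun y => ε + ‖u y‖) x := (differentiableAt_const ε).add hN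
  have hL : DifferentiableAt ℝ (fun y => Real.log (ε + ‖u y‖)) x := hA.log hpos.ne'
  have hC : DifferentiableAt ℝ (fun y => ((Real.log (ε + ‖u y‖) : ℝ) : ℂ)) x :=
    Complex.ofRealCLM.differentiableAt.comp x hL
  have h2u : DifferentiableAt ℝ (fun y => 2 * u y) x := hdiff.const_mul 2
  refine ⟨h2u.mul hC, ?_⟩
  have hnormN : ‖fderiv ℝ (fun y => ‖u y‖) x‖ ≤ ‖fderiv ℝ u x‖ := by
    have h1 : DifferentiableAt ℝ (Norm.norm : ℂ → ℝ) (u x) :=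
      (contDiffAt_norm ℝ (n := 1) hne).differentiableAt one_ne_zero
    have heq : fderiv ℝ (fun y => ‖u y‖) x
        = (fderiv ℝ (Norm.norm : ℂ → ℝ) (u x)).comp (fderiv ℝ u x) :=
      fderiv_comp x h1 hdiff
    rw [heq]
    calc ‖(fderiv ℝ (Norm.norm : ℂ → ℝ) (u x)).comp (fderiv ℝ u x)‖
        ≤ ‖fderiv ℝ (Norm.norm : ℂ → ℝ) (u x)‖ * ‖fderiv ℝ u x‖ :=
          ContinuousLinearMap.opNorm_comp_le _ _
      _ ≤ 1 * ‖fderiv ℝ u x‖ := by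
          gcongr
          simpa using norm_fderiv_le_of_lipschitz ℝ (lipschitzWith_one_norm (E := ℂ))
      _ = ‖fderiv ℝ u x‖ := one_mul _
  have hLder : HasFDerivAt (fun y => Real.log (ε + ‖u y‖))
      ((ε + ‖u x‖)⁻¹ • fderiv ℝ (fun y => ε + ‖u y‖) x) x :=
    (hA.hasFDerivAt).log hpos.ne'
  have hnormL : ‖fderiv ℝ (fun y => Real.log (ε + ‖u y‖)) x‖
      ≤ (ε + ‖u x‖)⁻¹ * ‖fderiv ℝ u x‖ := by
    rw [hLder.fderiv, norm_smul]
    have hAeq : fderiv ℝ (fun y => ε + ‖u y‖) x = fderiv ℝ (fun y => ‖u y‖) x := by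
      simpa using fderiv_const_add (𝕜 := ℝ) (f := fun y => ‖u y‖) (x := x) ε
    rw [hAeq, Real.norm_eq_abs, abs_of_nonneg (by positivity)]
    gcongr
  have hnormC : ‖fderiv ℝ (fun y => ((Real.log (ε + ‖u y‖) : ℝ) : ℂ)) x‖
      ≤ (ε + ‖u x‖)⁻¹ * ‖fderiv ℝ u x‖ := by
    have heq : fderiv ℝ (fun y => ((Real.log (ε + ‖u y‖) : ℝ) : ℂ)) x
        = (fderiv ℝ (Complex.ofRealCLM : ℝ → ℂ) (Real.log (ε + ‖u x‖))).comp
            (fderiv ℝ (fun y => Real.log (ε + ‖u y‖)) x) :=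
      fderiv_comp x Complex.ofRealCLM.differentiableAt hL
    rw [heq, ContinuousLinearMap.fderiv]
    calc ‖Complex.ofRealCLM.comp (fderiv ℝ (fun y => Real.log (ε + ‖u y‖)) x)‖
        ≤ ‖Complex.ofRealCLM‖ * ‖fderiv ℝ (fun y => Real.log (ε + ‖u y‖)) x‖ :=
          ContinuousLinearMap.opNorm_comp_le _ _
      _ ≤ (ε + ‖u x‖)⁻¹ * ‖fderiv ℝ u x‖ := by
          rw [Complex.ofRealCLM_norm, one_mul]; exact hnormL
  have h2unorm : ‖fderiv ℝ (fun y => 2 * u y) x‖ = 2 * ‖fderiv ℝ u x‖ := by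
    rw [fderiv_const_mul hdiff 2, norm_smul (2 : ℂ) (fderiv ℝ u x)]
    simp
  rw [fderiv_fun_mul h2u hC]
  calc ‖(2 * u x) • fderiv ℝ (fun y => ((Real.log (ε + ‖u y‖) : ℝ) : ℂ)) x
        + ((Real.log (ε + ‖u x‖) : ℝ) : ℂ) • fderiv ℝ (fun y => 2 * u y) x‖
      ≤ ‖(2 * u x) • fderiv ℝ (fun y => ((Real.log (ε + ‖u y‖) : ℝ) : ℂ)) x‖
        + ‖((Real.log (ε + ‖u x‖) : ℝ) : ℂ) • fderiv ℝ (fun y => 2 * u y) x‖ := norm_add_le _ _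
    _ = ‖2 * u x‖ * ‖fderiv ℝ (fun y => ((Real.log (ε + ‖u y‖) : ℝ) : ℂ)) x‖
        + ‖((Real.log (ε + ‖u x‖) : ℝ) : ℂ)‖ * ‖fderiv ℝ (fun y => 2 * u y) x‖ := by
        rw [norm_smul (2 * u x) (fderiv ℝ (fun y => ((Real.log (ε + ‖u y‖) : ℝ) : ℂ)) x),
          norm_smul ((Real.log (ε + ‖u x‖) : ℝ) : ℂ) (fderiv ℝ (fun y => 2 * u y) x)]
    _ ≤ (2 * ‖u x‖) * ((ε + ‖u x‖)⁻¹ * ‖fderiv ℝ u x‖)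
        + |Real.log (ε + ‖u x‖)| * (2 * ‖fderiv ℝ u x‖) := by
        rw [h2unorm]
        gcongr
        · simp [norm_mul]
        · simp [Complex.norm_real, Real.norm_eq_abs]
    _ ≤ 2 * ‖fderiv ℝ u x‖ + |Real.log (ε + ‖u x‖)| * (2 * ‖fderiv ℝ u x‖) := by
        have h1 : (2 * ‖u x‖) * ((ε + ‖u x‖)⁻¹ * ‖fderiv ℝ u x‖)
            ≤ 2 * ‖fderiv ℝ u x‖ := by
          have hle : ‖u x‖ * (ε + ‖u x‖)⁻¹ ≤ 1 := by
            rw [mul_inv_le_iff₀ hpos, one_mul]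
            linarith [hε]
          calc (2 * ‖u x‖) * ((ε + ‖u x‖)⁻¹ * ‖fderiv ℝ u x‖)
              = 2 * (‖u x‖ * (ε + ‖u x‖)⁻¹) * ‖fderiv ℝ u x‖ := by ring
            _ ≤ 2 * 1 * ‖fderiv ℝ u x‖ := by
                gcongr
            _ = 2 * ‖fderiv ℝ u x‖ := by ring
        linarith
    _ = 2 * ‖fderiv ℝ u x‖ * (1 + |Real.log (ε + ‖u x‖)|) := by ring
end

section
/- Let λ ∈ ℝ, v ∈ ℝ, b₀ ∈ ℂ with b₀ ≠ 0, and a₀ ∈ ℂ with α₀ := Re a₀ > 0. Let r : ℝ → ℝ be twice differentiable with r(t) > 0 for all t, r(0) = 1, r'(0) = −2·Im a₀, and r''(t) = 4α₀²/r(t)³ + 4λα₀/r(t) for all t; let φ : ℝ → ℝ be differentiable with φ(0) = 0 and φ'(t) = α₀/r(t)² + λ·ln(|b₀|²) − λ·ln(r(t)) for all t. Define u : ℝ × ℝ → ℂ by u(x,t) = (b₀/√(r(t)))·exp( i(vx − v²t) − iφ(t) − α₀·(x−2vt)²/(2r(t)²) + i·(r'(t)/r(t))·(x−2vt)²/4 ).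 Then u(x,0) = b₀·exp(−a₀x²/2 + ivx) for all x, and for all (x,t) ∈ ℝ × ℝ, i·∂_t u(x,t) + ∂_xx u(x,t) = λ·u(x,t)·ln(|u(x,t)|²). -/
set_option maxHeartbeats 1000000

theorem stmt_10 (lam v : ℝ) (b₀ a₀ : ℂ) (hb : b₀ ≠ 0) (hα : 0 < a₀.re)
    (r r' φ : ℝ → ℝ)
    (hrpos : ∀ t : ℝ, 0 < r t)
    (hr0 : r 0 = 1) (hr'0 : r' 0 = -2 * a₀.im)
    (hr : ∀ t : ℝ, HasDerivAt r (r' t) t)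
    (hr'' : ∀ t : ℝ, HasDerivAt r'
      (4 * a₀.re ^ 2 / (r t) ^ 3 + 4 * lam * a₀.re / r t) t)
    (hφ0 : φ 0 = 0)
    (hφ : ∀ t : ℝ, HasDerivAt φ
      (a₀.re / (r t) ^ 2 + lam * Real.log (‖b₀‖ ^ 2) - lam * Real.log (r t)) t)
    (u : ℝ → ℝ → ℂ)
    (hu : ∀ x t : ℝ, u x t = (b₀ / (Real.sqrt (r t) : ℂ)) *
      Complex.exp (Complex.I * ((v * x - v ^ 2 * t : ℝ) : ℂ)
        - Complex.I * ((φ t : ℝ) : ℂ)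
        - (a₀.re : ℂ) * ((x - 2 * v * t : ℝ) : ℂ) ^ 2 / (2 * ((r t : ℝ) : ℂ) ^ 2)
        + Complex.I * ((r' t / r t : ℝ) : ℂ) * ((x - 2 * v * t : ℝ) : ℂ) ^ 2 / 4)) :
    (∀ x : ℝ, u x 0 = b₀ * Complex.exp (-a₀ * (x : ℂ) ^ 2 / 2 + Complex.I * v * x)) ∧
    (∀ x t : ℝ,
      Complex.I * deriv (fun s => u x s) t
        + deriv (fun y => deriv (fun z => u z t) y) x
      = (lam : ℂ) * u x t * (Real.log (‖u x t‖ ^ 2) : ℂ)) := by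
  have hrne : ∀ t : ℝ, r t ≠ 0 := fun t => (hrpos t).ne'
  -- the key reformulation : u = b₀ exp(I·A + B) with A, B real
  have key : ∀ x t : ℝ, u x t = b₀ * Complex.exp
      (Complex.I * ((v * x - v ^ 2 * t - φ t + (r' t / r t) * (x - 2 * v * t) ^ 2 / 4 : ℝ) : ℂ)
        + ((-(a₀.re * (x - 2 * v * t) ^ 2 / (2 * (r t) ^ 2)) - Real.log (r t) / 2 : ℝ) : ℂ)) := by
    intro x t
    have hρC : ((r t : ℝ) : ℂ) ≠ 0 := Complex.ofReal_ne_zero.mpr (hrne t)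
    have h1 : Real.sqrt (r t) = Real.exp (Real.log (r t) / 2) := by
      have h2 : Real.exp (Real.log (r t) / 2) ^ 2 = r t := by
        rw [sq, ← Real.exp_add, add_halves, Real.exp_log (hrpos t)]
      nth_rewrite 1 [← h2]
      rw [Real.sqrt_sq (Real.exp_nonneg _)]
    rw [hu x t, h1]
    rw [show ((Real.exp (Real.log (r t) / 2) : ℝ) : ℂ)
        = Complex.exp (((Real.log (r t) / 2 : ℝ)) : ℂ) from Complex.ofReal_exp _]
    rw [div_mul_eq_mul_div, mul_div_assoc, ← Complex.exp_sub]
    congr 1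
    push_cast
    field_simp
    ring
  constructor
  · intro x
    rw [hu x 0, hr0, hφ0, hr'0]
    simp only [Real.sqrt_one, Complex.ofReal_one, div_one]
    congr 1
    congr 1
    push_cast
    linear_combination (-(x:ℂ)^2/2) * (Complex.re_add_im a₀)
  · intro x t
    have hρne := hrne t
    have hρC : ((r t : ℝ) : ℂ) ≠ 0 := Complex.ofReal_ne_zero.mpr hρne
    -- t-derivative of the real part functions
    have hX : HasDerivAt (fun s : ℝ => x - 2 * v * s) (-(2 * v * 1)) t :=
      HasDerivAt.const_sub x ((hasDerivAt_id t).const_mul (2 * v))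
    have hA : HasDerivAt (fun s => v * x - v ^ 2 * s - φ s + (r' s / r s) * (x - 2 * v * s) ^ 2 / 4)
        (-v^2 - (a₀.re / (r t)^2 + lam * Real.log (‖b₀‖ ^ 2) - lam * Real.log (r t))
          + (a₀.re^2 / (r t)^4 + lam * a₀.re / (r t)^2 - (r' t)^2 / (4 * (r t)^2)) * (x - 2 * v * t)^2
          - v * (x - 2 * v * t) * (r' t) / (r t)) t := by
      have hlin : HasDerivAt (fun s : ℝ => v * x - v ^ 2 * s) (-(v ^ 2 * 1)) t :=
        HasDerivAt.const_sub (v * x) ((hasDerivAt_id t).const_mul (v ^ 2))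
      have hq := (((hr'' t).div (hr t) hρne).mul (hX.pow 2)).div_const 4
      have h := (hlin.sub (hφ t)).add hq
      refine h.congr_deriv ?_
      simp only [Pi.pow_apply, Pi.div_apply]
      field_simp
      ring
    have hB : HasDerivAt (fun s => -(a₀.re * (x - 2 * v * s) ^ 2 / (2 * (r s) ^ 2)) - Real.log (r s) / 2)
        (2 * a₀.re * v * (x - 2 * v * t) / (r t)^2
          + a₀.re * (x - 2 * v * t)^2 * (r' t) / (r t)^3 - (r' t) / (2 * (r t))) t := by
      have h2ρ : (2 : ℝ) * (r t) ^ 2 ≠ 0 := by positivity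
      have hq := (((hX.pow 2).const_mul a₀.re).div (((hr t).pow 2).const_mul 2) h2ρ).neg
      have h := hq.sub (((hr t).log hρne).div_const 2)
      refine h.congr_deriv ?_
      simp only [Pi.pow_apply, Pi.div_apply]
      field_simp
      ring
    have hFt : HasDerivAt (fun s => Complex.I *
          ((v * x - v ^ 2 * s - φ s + (r' s / r s) * (x - 2 * v * s) ^ 2 / 4 : ℝ) : ℂ)
          + ((-(a₀.re * (x - 2 * v * s) ^ 2 / (2 * (r s) ^ 2)) - Real.log (r s) / 2 : ℝ) : ℂ))
        (Complex.I * ((-v^2 - (a₀.re / (r t)^2 + lam * Real.log (‖b₀‖ ^ 2) - lam * Real.log (r t))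
            + (a₀.re^2 / (r t)^4 + lam * a₀.re / (r t)^2 - (r' t)^2 / (4 * (r t)^2)) * (x - 2 * v * t)^2
            - v * (x - 2 * v * t) * (r' t) / (r t) : ℝ) : ℂ)
          + ((2 * a₀.re * v * (x - 2 * v * t) / (r t)^2
            + a₀.re * (x - 2 * v * t)^2 * (r' t) / (r t)^3 - (r' t) / (2 * (r t)) : ℝ) : ℂ)) t :=
      (hA.ofReal_comp.const_mul Complex.I).add hB.ofReal_comp
    have hut : deriv (fun s => u x s) t
        = b₀ * (Complex.exp (Complex.I * ((v * x - v ^ 2 * t - φ t + (r' t / r t) * (x - 2 * v * t) ^ 2 / 4 : ℝ) : ℂ)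
            + ((-(a₀.re * (x - 2 * v * t) ^ 2 / (2 * (r t) ^ 2)) - Real.log (r t) / 2 : ℝ) : ℂ))
          * (Complex.I * ((-v^2 - (a₀.re / (r t)^2 + lam * Real.log (‖b₀‖ ^ 2) - lam * Real.log (r t))
              + (a₀.re^2 / (r t)^4 + lam * a₀.re / (r t)^2 - (r' t)^2 / (4 * (r t)^2)) * (x - 2 * v * t)^2
              - v * (x - 2 * v * t) * (r' t) / (r t) : ℝ) : ℂ)
            + ((2 * a₀.re * v * (x - 2 * v * t) / (r t)^2
              + a₀.re * (x - 2 * v * t)^2 * (r' t) / (r t)^3 - (r' t) / (2 * (r t)) : ℝ) : ℂ))) := by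
      have hfunt : (fun s => u x s) = fun s => b₀ * Complex.exp
          (Complex.I * ((v * x - v ^ 2 * s - φ s + (r' s / r s) * (x - 2 * v * s) ^ 2 / 4 : ℝ) : ℂ)
            + ((-(a₀.re * (x - 2 * v * s) ^ 2 / (2 * (r s) ^ 2)) - Real.log (r s) / 2 : ℝ) : ℂ)) :=
        funext fun s => key x s
      rw [hfunt, (hFt.cexp.const_mul b₀).deriv]
    -- x-derivatives
    have hY : ∀ z : ℝ, HasDerivAt (fun z : ℝ => z - 2 * v * t) 1 z := fun z => by
      simpa using (hasDerivAt_id z).sub_const (2 * v * t)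
    have hP : ∀ z : ℝ, HasDerivAt (fun z => v * z - v ^ 2 * t - φ t + (r' t / r t) * (z - 2 * v * t) ^ 2 / 4)
        (v + (r' t / r t) * (z - 2 * v * t) / 2) z := by
      intro z
      have h := ((((hasDerivAt_id z).const_mul v).sub_const (v ^ 2 * t)).sub_const (φ t)).add
        ((((hY z).pow 2).const_mul (r' t / r t)).div_const 4)
      refine h.congr_deriv ?_
      push_cast
      ring
    have hQ : ∀ z : ℝ, HasDerivAt (fun z => -(a₀.re * (z - 2 * v * t) ^ 2 / (2 * (r t) ^ 2)) - Real.log (r t) / 2)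
        (-(a₀.re * (z - 2 * v * t) / (r t)^2)) z := by
      intro z
      have h := (((((hY z).pow 2).const_mul a₀.re).div_const (2 * (r t) ^ 2)).neg).sub_const
        (Real.log (r t) / 2)
      refine h.congr_deriv ?_
      field_simp
      ring
    have hdz : ∀ y : ℝ, HasDerivAt (fun z => u z t)
        (b₀ * (Complex.exp (Complex.I * ((v * y - v ^ 2 * t - φ t + (r' t / r t) * (y - 2 * v * t) ^ 2 / 4 : ℝ) : ℂ)
            + ((-(a₀.re * (y - 2 * v * t) ^ 2 / (2 * (r t) ^ 2)) - Real.log (r t) / 2 : ℝ) : ℂ))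
          * (Complex.I * ((v + (r' t / r t) * (y - 2 * v * t) / 2 : ℝ) : ℂ)
            + ((-(a₀.re * (y - 2 * v * t) / (r t)^2) : ℝ) : ℂ)))) y := by
      intro y
      have hfun : (fun z => u z t) = fun z => b₀ * Complex.exp
          (Complex.I * ((v * z - v ^ 2 * t - φ t + (r' t / r t) * (z - 2 * v * t) ^ 2 / 4 : ℝ) : ℂ)
            + ((-(a₀.re * (z - 2 * v * t) ^ 2 / (2 * (r t) ^ 2)) - Real.log (r t) / 2 : ℝ) : ℂ)) :=
        funext fun z => key z t
      rw [hfun]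
      exact ((((hP y).ofReal_comp.const_mul Complex.I).add (hQ y).ofReal_comp).cexp).const_mul b₀
    have hd1 : (fun y => deriv (fun z => u z t) y) = fun y =>
        b₀ * (Complex.exp (Complex.I * ((v * y - v ^ 2 * t - φ t + (r' t / r t) * (y - 2 * v * t) ^ 2 / 4 : ℝ) : ℂ)
            + ((-(a₀.re * (y - 2 * v * t) ^ 2 / (2 * (r t) ^ 2)) - Real.log (r t) / 2 : ℝ) : ℂ))
          * (Complex.I * ((v + (r' t / r t) * (y - 2 * v * t) / 2 : ℝ) : ℂ)
            + ((-(a₀.re * (y - 2 * v * t) / (r t)^2) : ℝ) : ℂ))) :=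
      funext fun y => (hdz y).deriv
    -- second x-derivative
    have hP' : HasDerivAt (fun y : ℝ => v + (r' t / r t) * (y - 2 * v * t) / 2) ((r' t / r t) / 2) x := by
      have h := ((((hY x).const_mul (r' t / r t)).div_const 2).const_add v)
      refine h.congr_deriv ?_
      ring
    have hQ' : HasDerivAt (fun y : ℝ => -(a₀.re * (y - 2 * v * t) / (r t)^2)) (-(a₀.re / (r t)^2)) x := by
      have h := ((((hY x).const_mul a₀.re).div_const ((r t)^2)).neg)
      refine h.congr_deriv ?_
      ring
    have hW : HasDerivAt (fun y : ℝ => Complex.I * ((v + (r' t / r t) * (y - 2 * v * t) / 2 : ℝ) : ℂ)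
          + ((-(a₀.re * (y - 2 * v * t) / (r t)^2) : ℝ) : ℂ))
        (Complex.I * (((r' t / r t) / 2 : ℝ) : ℂ) + ((-(a₀.re / (r t)^2) : ℝ) : ℂ)) x :=
      (hP'.ofReal_comp.const_mul Complex.I).add hQ'.ofReal_comp
    have hZx : HasDerivAt (fun z : ℝ => Complex.I *
          ((v * z - v ^ 2 * t - φ t + (r' t / r t) * (z - 2 * v * t) ^ 2 / 4 : ℝ) : ℂ)
          + ((-(a₀.re * (z - 2 * v * t) ^ 2 / (2 * (r t) ^ 2)) - Real.log (r t) / 2 : ℝ) : ℂ))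
        (Complex.I * ((v + (r' t / r t) * (x - 2 * v * t) / 2 : ℝ) : ℂ)
          + ((-(a₀.re * (x - 2 * v * t) / (r t)^2) : ℝ) : ℂ)) x :=
      (((hP x).ofReal_comp.const_mul Complex.I).add (hQ x).ofReal_comp)
    have huxx : deriv (fun y => deriv (fun z => u z t) y) x
        = b₀ * ((Complex.exp (Complex.I * ((v * x - v ^ 2 * t - φ t + (r' t / r t) * (x - 2 * v * t) ^ 2 / 4 : ℝ) : ℂ)
              + ((-(a₀.re * (x - 2 * v * t) ^ 2 / (2 * (r t) ^ 2)) - Real.log (r t) / 2 : ℝ) : ℂ))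
            * (Complex.I * ((v + (r' t / r t) * (x - 2 * v * t) / 2 : ℝ) : ℂ)
              + ((-(a₀.re * (x - 2 * v * t) / (r t)^2) : ℝ) : ℂ)))
            * (Complex.I * ((v + (r' t / r t) * (x - 2 * v * t) / 2 : ℝ) : ℂ)
              + ((-(a₀.re * (x - 2 * v * t) / (r t)^2) : ℝ) : ℂ))
          + Complex.exp (Complex.I * ((v * x - v ^ 2 * t - φ t + (r' t / r t) * (x - 2 * v * t) ^ 2 / 4 : ℝ) : ℂ)
              + ((-(a₀.re * (x - 2 * v * t) ^ 2 / (2 * (r t) ^ 2)) - Real.log (r t) / 2 : ℝ) : ℂ))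
            * (Complex.I * (((r' t / r t) / 2 : ℝ) : ℂ) + ((-(a₀.re / (r t)^2) : ℝ) : ℂ))) := by
      rw [hd1]
      exact (((hZx.cexp).mul hW).const_mul b₀).deriv
    -- the logarithm of |u|^2
    have habs : Real.log (‖u x t‖ ^ 2)
        = Real.log (‖b₀‖ ^ 2)
          + ((-(a₀.re * (x - 2 * v * t) ^ 2 / (2 * (r t) ^ 2)) - Real.log (r t) / 2)
            + (-(a₀.re * (x - 2 * v * t) ^ 2 / (2 * (r t) ^ 2)) - Real.log (r t) / 2)) := by
      have h1 : ‖u x t‖ ^ 2 = ‖b₀‖ ^ 2 *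
          Real.exp ((-(a₀.re * (x - 2 * v * t) ^ 2 / (2 * (r t) ^ 2)) - Real.log (r t) / 2)
            + (-(a₀.re * (x - 2 * v * t) ^ 2 / (2 * (r t) ^ 2)) - Real.log (r t) / 2)) := by
        rw [key x t, norm_mul, Complex.norm_exp]
        have hre : (Complex.I * ((v * x - v ^ 2 * t - φ t + (r' t / r t) * (x - 2 * v * t) ^ 2 / 4 : ℝ) : ℂ)
            + ((-(a₀.re * (x - 2 * v * t) ^ 2 / (2 * (r t) ^ 2)) - Real.log (r t) / 2 : ℝ) : ℂ)).re
            = -(a₀.re * (x - 2 * v * t) ^ 2 / (2 * (r t) ^ 2)) - Real.log (r t) / 2 := by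
          simp only [Complex.add_re, Complex.mul_re, Complex.I_re, Complex.I_im,
            Complex.ofReal_re, Complex.ofReal_im]
          ring
        rw [hre, mul_pow, sq (Real.exp _), ← Real.exp_add]
      rw [h1, Real.log_mul (pow_ne_zero 2 (norm_ne_zero_iff.mpr hb)) (Real.exp_ne_zero _),
        Real.log_exp]
    -- finish
    rw [hut, huxx, habs, key x t]
    -- scalar identities (real and imaginary part)
    have h1 : (2 * a₀.re * v * (x - 2 * v * t) / (r t)^2
          + a₀.re * (x - 2 * v * t)^2 * (r' t) / (r t)^3 - (r' t) / (2 * (r t)))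
        + 2 * (v + (r' t / r t) * (x - 2 * v * t) / 2) * (-(a₀.re * (x - 2 * v * t) / (r t)^2))
        + (r' t / r t) / 2 = 0 := by
      field_simp
      ring
    have h2 : -(-v^2 - (a₀.re / (r t)^2 + lam * Real.log (‖b₀‖ ^ 2) - lam * Real.log (r t))
          + (a₀.re^2 / (r t)^4 + lam * a₀.re / (r t)^2 - (r' t)^2 / (4 * (r t)^2)) * (x - 2 * v * t)^2
          - v * (x - 2 * v * t) * (r' t) / (r t))
        - (v + (r' t / r t) * (x - 2 * v * t) / 2)^2
        + (-(a₀.re * (x - 2 * v * t) / (r t)^2))^2 + (-(a₀.re / (r t)^2))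
        = lam * (Real.log (‖b₀‖ ^ 2)
          + ((-(a₀.re * (x - 2 * v * t) ^ 2 / (2 * (r t) ^ 2)) - Real.log (r t) / 2)
            + (-(a₀.re * (x - 2 * v * t) ^ 2 / (2 * (r t) ^ 2)) - Real.log (r t) / 2))) := by
      field_simp
      ring
    have h1' : ((2 * a₀.re * v * (x - 2 * v * t) / (r t)^2
          + a₀.re * (x - 2 * v * t)^2 * (r' t) / (r t)^3 - (r' t) / (2 * (r t)) : ℝ) : ℂ)
        + 2 * ((v + (r' t / r t) * (x - 2 * v * t) / 2 : ℝ) : ℂ) * ((-(a₀.re * (x - 2 * v * t) / (r t)^2) : ℝ) : ℂ)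
        + (((r' t / r t) / 2 : ℝ) : ℂ) = 0 := by exact_mod_cast congrArg (Complex.ofReal) h1
    have h2' : -((-v^2 - (a₀.re / (r t)^2 + lam * Real.log (‖b₀‖ ^ 2) - lam * Real.log (r t))
          + (a₀.re^2 / (r t)^4 + lam * a₀.re / (r t)^2 - (r' t)^2 / (4 * (r t)^2)) * (x - 2 * v * t)^2
          - v * (x - 2 * v * t) * (r' t) / (r t) : ℝ) : ℂ)
        - (((v + (r' t / r t) * (x - 2 * v * t) / 2 : ℝ) : ℂ))^2
        + (((-(a₀.re * (x - 2 * v * t) / (r t)^2) : ℝ) : ℂ))^2 + (((-(a₀.re / (r t)^2) : ℝ) : ℂ))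
        = (lam : ℂ) * (((Real.log (‖b₀‖ ^ 2) : ℝ) : ℂ)
          + (((-(a₀.re * (x - 2 * v * t) ^ 2 / (2 * (r t) ^ 2)) - Real.log (r t) / 2 : ℝ) : ℂ)
            + ((-(a₀.re * (x - 2 * v * t) ^ 2 / (2 * (r t) ^ 2)) - Real.log (r t) / 2 : ℝ) : ℂ))) := by
      exact_mod_cast congrArg (Complex.ofReal) h2
    set E := Complex.exp (Complex.I * ((v * x - v ^ 2 * t - φ t + (r' t / r t) * (x - 2 * v * t) ^ 2 / 4 : ℝ) : ℂ)
        + ((-(a₀.re * (x - 2 * v * t) ^ 2 / (2 * (r t) ^ 2)) - Real.log (r t) / 2 : ℝ) : ℂ)) with hE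
    push_cast at h1' h2' ⊢
    linear_combination (b₀ * E) *
      (((-(v:ℂ)^2 - ((a₀.re:ℂ) / ((r t : ℝ):ℂ)^2 + (lam:ℂ) * ((Real.log (‖b₀‖ ^ 2) : ℝ):ℂ)
            - (lam:ℂ) * ((Real.log (r t) : ℝ):ℂ))
          + ((a₀.re:ℂ)^2 / ((r t : ℝ):ℂ)^4 + (lam:ℂ) * (a₀.re:ℂ) / ((r t : ℝ):ℂ)^2
            - ((r' t : ℝ):ℂ)^2 / (4 * ((r t : ℝ):ℂ)^2)) * ((x:ℂ) - 2 * (v:ℂ) * (t:ℂ))^2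
          - (v:ℂ) * ((x:ℂ) - 2 * (v:ℂ) * (t:ℂ)) * ((r' t : ℝ):ℂ) / ((r t : ℝ):ℂ))
        + ((v:ℂ) + (((r' t : ℝ):ℂ) / ((r t : ℝ):ℂ)) * ((x:ℂ) - 2 * (v:ℂ) * (t:ℂ)) / 2)^2) * Complex.I_sq
        + Complex.I * h1' + h2')
end

section
/- Let λ < 0, b₀ > 0 a real number, and v ∈ ℝ. Define u : ℝ × ℝ → ℂ by u(x,t) = b₀·exp( i(vx − v²t) + (λ/2)(x − 2vt)² − i(−λ + λ·ln(b₀²))·t ). Then for all (x,t) ∈ ℝ × ℝ, i·∂_t u(x,t) + ∂_xx u(x,t) = λ·u(x,t)·ln(|u(x,t)|²); that is, the moving Gausson of velocity v is an exact solution of the one-dimensional logarithmic Schrödinger equation. -/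
open Complex

noncomputable def phase (a b c X T : ℂ) : ℂ :=
  I * (a * X - a ^ 2 * T) + (b / 2) * (X - 2 * a * T) ^ 2 - I * c * T

lemma phase_dT (a b c X T : ℂ) :
    HasDerivAt (fun T => phase a b c X T)
      (-(I * a ^ 2) - 2 * b * a * (X - 2 * a * T) - I * c) T := by
  have h1 : HasDerivAt (fun T : ℂ => a * X - a ^ 2 * T) (-(a ^ 2)) T := by
    simpa using (hasDerivAt_const T (a * X)).fun_sub ((hasDerivAt_id T).const_mul (a ^ 2))
  have h2 : HasDerivAt (fun T : ℂ => X - 2 * a * T) (-(2 * a)) T := by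
    simpa using (hasDerivAt_const T X).fun_sub ((hasDerivAt_id T).const_mul (2 * a))
  have h3 := (h2.pow 2).const_mul (b / 2)
  have h5 : HasDerivAt (fun T : ℂ => I * c * T) (I * c) T := by
    simpa using (hasDerivAt_id T).const_mul (I * c)
  have := ((h1.const_mul I).fun_add h3).fun_sub h5
  exact this.congr_deriv (by ring)

lemma phase_dX (a b c X T : ℂ) :
    HasDerivAt (fun X => phase a b c X T) (I * a + b * (X - 2 * a * T)) X := by
  have h1 : HasDerivAt (fun X : ℂ => a * X - a ^ 2 * T) a X := by
    simpa using ((hasDerivAt_id X).const_mul a).fun_sub (hasDerivAt_const X (a ^ 2 * T))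
  have h2 : HasDerivAt (fun X : ℂ => X - 2 * a * T) 1 X :=
    (hasDerivAt_id X).sub_const _
  have h3 := (h2.pow 2).const_mul (b / 2)
  have h5 : HasDerivAt (fun X : ℂ => I * c * T) 0 X := hasDerivAt_const X _
  have := ((h1.const_mul I).fun_add h3).fun_sub h5
  exact this.congr_deriv (by ring)

lemma uT (B a b c X T : ℂ) :
    HasDerivAt (fun T => B * Complex.exp (phase a b c X T))
      (B * Complex.exp (phase a b c X T) *
        (-(I * a ^ 2) - 2 * b * a * (X - 2 * a * T) - I * c)) T := by
  have := ((phase_dT a b c X T).cexp).const_mul B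
  exact this.congr_deriv (by ring)

lemma uX (B a b c T X : ℂ) :
    HasDerivAt (fun X => B * Complex.exp (phase a b c X T))
      (B * Complex.exp (phase a b c X T) * (I * a + b * (X - 2 * a * T))) X := by
  have := ((phase_dX a b c X T).cexp).const_mul B
  exact this.congr_deriv (by ring)

lemma uXX (B a b c T X : ℂ) :
    HasDerivAt (fun X => B * Complex.exp (phase a b c X T) * (I * a + b * (X - 2 * a * T)))
      (B * Complex.exp (phase a b c X T) *
        ((I * a + b * (X - 2 * a * T)) ^ 2 + b)) X := by
  have h2 : HasDerivAt (fun X : ℂ => I * a + b * (X - 2 * a * T)) b X := by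
    simpa using (hasDerivAt_const X (I * a)).fun_add
      (((hasDerivAt_id X).sub_const (2 * a * T)).const_mul b)
  have := (uX B a b c T X).fun_mul h2
  exact this.congr_deriv (by ring)

theorem stmt_11 (lam : ℝ) (hlam : lam < 0) (b₀ : ℝ) (hb : 0 < b₀) (v : ℝ)
    (u : ℝ → ℝ → ℂ)
    (hu : ∀ x t : ℝ, u x t = (b₀ : ℂ) *
      Complex.exp (Complex.I * ((v * x - v ^ 2 * t : ℝ) : ℂ)
        + ((lam / 2 * (x - 2 * v * t) ^ 2 : ℝ) : ℂ)
        - Complex.I * ((-lam + lam * Real.log (b₀ ^ 2) : ℝ) : ℂ) * (t : ℂ))) :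
    ∀ x t : ℝ,
      Complex.I * deriv (fun s => u x s) t
        + deriv (fun y => deriv (fun z => u z t) y) x
      = (lam : ℂ) * u x t * (Real.log (‖u x t‖ ^ 2) : ℂ) := by
  intro x t
  set a : ℂ := (v : ℂ) with ha
  set b : ℂ := (lam : ℂ) with hbb
  set c : ℂ := ((-lam + lam * Real.log (b₀ ^ 2) : ℝ) : ℂ) with hc
  have hu' : ∀ x t : ℝ, u x t = (b₀ : ℂ) * Complex.exp (phase a b c x t) := by
    intro x t
    rw [hu]
    congr 1
    unfold phase
    push_cast [ha, hbb, hc]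
    ring
  have h1 : deriv (fun s : ℝ => u x s) t
      = (b₀ : ℂ) * Complex.exp (phase a b c x t) *
        (-(I * a ^ 2) - 2 * b * a * ((x : ℂ) - 2 * a * t) - I * c) := by
    have he : (fun s : ℝ => u x s) = fun s : ℝ => (b₀ : ℂ) * Complex.exp (phase a b c x s) :=
      funext fun s => hu' x s
    rw [he]
    exact ((uT b₀ a b c x t).comp_ofReal).deriv
  have hin : ∀ y : ℝ, deriv (fun z : ℝ => u z t) y
      = (b₀ : ℂ) * Complex.exp (phase a b c y t) * (I * a + b * ((y : ℂ) - 2 * a * t)) := by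
    intro y
    have he : (fun z : ℝ => u z t) = fun z : ℝ => (b₀ : ℂ) * Complex.exp (phase a b c z t) :=
      funext fun z => hu' z t
    rw [he]
    exact ((uX b₀ a b c t y).comp_ofReal).deriv
  have h2 : deriv (fun y : ℝ => deriv (fun z => u z t) y) x
      = (b₀ : ℂ) * Complex.exp (phase a b c x t) *
        ((I * a + b * ((x : ℂ) - 2 * a * t)) ^ 2 + b) := by
    have he : (fun y : ℝ => deriv (fun z => u z t) y)
        = fun y : ℝ => (b₀ : ℂ) * Complex.exp (phase a b c y t) *
            (I * a + b * ((y : ℂ) - 2 * a * t)) := funext hin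
    rw [he]
    exact ((uXX b₀ a b c t x).comp_ofReal).deriv
  have hφ : phase a b c (x : ℂ) (t : ℂ)
      = ((lam / 2 * (x - 2 * v * t) ^ 2 : ℝ) : ℂ)
        + ((v * x - v ^ 2 * t - (-lam + lam * Real.log (b₀ ^ 2)) * t : ℝ) : ℂ) * I := by
    unfold phase
    push_cast [ha, hbb, hc]
    ring
  have habs : ‖u x t‖ = b₀ * Real.exp (lam / 2 * (x - 2 * v * t) ^ 2) := by
    rw [hu' x t, norm_mul, Complex.norm_exp, Complex.norm_real, Real.norm_eq_abs, abs_of_pos hb, hφ]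
    congr 1
    simp only [Complex.add_re, Complex.ofReal_re, Complex.mul_I_re, Complex.ofReal_im]
    ring
  have hlog : Real.log (‖u x t‖ ^ 2)
      = Real.log (b₀ ^ 2) + lam * (x - 2 * v * t) ^ 2 := by
    rw [habs, mul_pow, Real.log_mul (by positivity) (by positivity),
      ← Real.exp_nat_mul, Real.log_exp]
    push_cast
    ring
  rw [h1, h2, hlog, hu' x t]
  push_cast [ha, hbb, hc]
  ring_nf
  rw [Complex.I_sq]
  ring
end

section
/- Let M ≥ 1 be an integer, h > 0, τ > 0, ε > 0, λ ∈ ℝ, and set f_ε(s) = 2λ·ln(ε + √s) and G_ε(z₁,z₂) = (∫₀¹ f_ε(θ|z₁|² + (1−θ)|z₂|²) dθ)·(z₁ + z₂)/2 for z₁, z₂ ∈ ℂ. Suppose u, w : ZMod M → ℂ satisfy the Crank-Nicolson finite difference relation i·(w(j) − u(j))/τ = −(1/(2h²))·((u(j+1) − 2u(j) + u(j−1)) + (w(j+1) − 2w(j) + w(j−1))) + G_ε(w(j), u(j)) for every j ∈ ZMod M. Then the discrete mass is conserved: ∑_{j ∈ ZMod M} |w(j)|² = ∑_{j ∈ ZMod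 M} |u(j)|². -/
open Complex Finset

theorem stmt_15 (M : ℕ) [NeZero M] (hM : 1 ≤ M) (h τ ε lam : ℝ)
    (hh : 0 < h) (hτ : 0 < τ) (hε : 0 < ε)
    (G : ℂ → ℂ → ℂ)
    (hG : ∀ z₁ z₂ : ℂ, G z₁ z₂ =
      ((∫ θ in (0:ℝ)..1,
          2 * lam * Real.log (ε + Real.sqrt (θ * ‖z₁‖ ^ 2
            + (1 - θ) * ‖z₂‖ ^ 2))) : ℝ) * (z₁ + z₂) / 2)
    (u w : ZMod M → ℂ)
    (hCN : ∀ j : ZMod M,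
      Complex.I * (w j - u j) / (τ : ℂ)
        = -(1 / (2 * (h : ℂ) ^ 2)) *
            ((u (j + 1) - 2 * u j + u (j - 1)) + (w (j + 1) - 2 * w j + w (j - 1)))
          + G (w j) (u j)) :
    ∑ j : ZMod M, ‖w j‖ ^ 2 = ∑ j : ZMod M, ‖u j‖ ^ 2 := by
  have hτ' : (τ : ℂ) ≠ 0 := by exact_mod_cast hτ.ne'
  set v : ZMod M → ℂ := fun j => w j + u j with hvdef
  -- pointwise multiplied equation
  have hpt : ∀ j : ZMod M, Complex.I * (w j - u j) * (starRingEnd ℂ) (v j)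
      = (τ : ℂ) * ((-(1 / (2 * (h : ℂ) ^ 2)) * (v (j + 1) - 2 * v j + v (j - 1))
            + G (w j) (u j)) * (starRingEnd ℂ) (v j)) := by
    intro j
    have h1 := hCN j
    rw [div_eq_iff hτ'] at h1
    calc Complex.I * (w j - u j) * (starRingEnd ℂ) (v j)
        = (Complex.I * (w j - u j)) * (starRingEnd ℂ) (v j) := by ring
      _ = ((-(1 / (2 * (h : ℂ) ^ 2)) *
            ((u (j + 1) - 2 * u j + u (j - 1)) + (w (j + 1) - 2 * w j + w (j - 1)))
          + G (w j) (u j)) * (τ : ℂ)) * (starRingEnd ℂ) (v j) := by rw [h1]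
      _ = (τ : ℂ) * ((-(1 / (2 * (h : ℂ) ^ 2)) * (v (j + 1) - 2 * v j + v (j - 1))
            + G (w j) (u j)) * (starRingEnd ℂ) (v j)) := by simp only [hvdef]; ring
  have hsum : ∑ j : ZMod M, Complex.I * (w j - u j) * (starRingEnd ℂ) (v j)
      = (τ : ℂ) * ∑ j : ZMod M, ((-(1 / (2 * (h : ℂ) ^ 2)) * (v (j + 1) - 2 * v j + v (j - 1))
            + G (w j) (u j)) * (starRingEnd ℂ) (v j)) := by
    rw [Finset.mul_sum]
    exact Finset.sum_congr rfl fun j _ => hpt j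
  -- LHS imaginary part
  have hlhs : (∑ j : ZMod M, Complex.I * (w j - u j) * (starRingEnd ℂ) (v j)).im
      = ∑ j : ZMod M, (‖w j‖ ^ 2 - ‖u j‖ ^ 2) := by
    rw [Complex.im_sum]
    refine Finset.sum_congr rfl fun j _ => ?_
    simp only [hvdef, Complex.sq_norm, Complex.normSq_apply, Complex.mul_im, Complex.mul_re,
      Complex.I_re, Complex.I_im, Complex.sub_re, Complex.sub_im, Complex.add_re, Complex.add_im,
      Complex.conj_re, Complex.conj_im]
    ring
  -- RHS imaginary part is zero
  -- G term
  have hGim : ∀ j : ZMod M, (G (w j) (u j) * (starRingEnd ℂ) (v j)).im = 0 := by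
    intro j
    rw [hG]
    have : ((((∫ θ in (0:ℝ)..1,
          2 * lam * Real.log (ε + Real.sqrt (θ * ‖w j‖ ^ 2
            + (1 - θ) * ‖u j‖ ^ 2))) : ℝ)) : ℂ) * (w j + u j) / 2
          * (starRingEnd ℂ) (v j)
        = ((((∫ θ in (0:ℝ)..1,
          2 * lam * Real.log (ε + Real.sqrt (θ * ‖w j‖ ^ 2
            + (1 - θ) * ‖u j‖ ^ 2))) : ℝ)) : ℂ) / 2
          * (v j * (starRingEnd ℂ) (v j)) := by
      simp only [hvdef]; ring
    rw [this, Complex.mul_conj]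
    simp [Complex.mul_im]
  -- Laplacian term
  have hA : (∑ j : ZMod M, v (j - 1) * (starRingEnd ℂ) (v j))
      = (starRingEnd ℂ) (∑ j : ZMod M, v (j + 1) * (starRingEnd ℂ) (v j)) := by
    rw [map_sum]
    have := Equiv.sum_comp (Equiv.addRight (1 : ZMod M))
      (fun j => v (j - 1) * (starRingEnd ℂ) (v j))
    rw [← this]
    refine Finset.sum_congr rfl fun j _ => ?_
    simp [Equiv.addRight, mul_comm]
  have hT : (∑ j : ZMod M, (v (j + 1) - 2 * v j + v (j - 1)) * (starRingEnd ℂ) (v j)).im = 0 := by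
    have hsplit : ∑ j : ZMod M, (v (j + 1) - 2 * v j + v (j - 1)) * (starRingEnd ℂ) (v j)
        = (∑ j : ZMod M, v (j + 1) * (starRingEnd ℂ) (v j))
          + (∑ j : ZMod M, v (j - 1) * (starRingEnd ℂ) (v j))
          - 2 * ∑ j : ZMod M, v j * (starRingEnd ℂ) (v j) := by
      rw [Finset.mul_sum, ← Finset.sum_add_distrib, ← Finset.sum_sub_distrib]
      exact Finset.sum_congr rfl fun j _ => by ring
    rw [hsplit, hA, Complex.add_conj]
    have h0 : (∑ j : ZMod M, v j * (starRingEnd ℂ) (v j)).im = 0 := by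
      rw [Complex.im_sum]
      simp [Complex.mul_conj]
    simp [Complex.sub_im, Complex.mul_im, h0]
  -- assemble RHS
  have hrhs : (∑ j : ZMod M, ((-(1 / (2 * (h : ℂ) ^ 2)) * (v (j + 1) - 2 * v j + v (j - 1))
            + G (w j) (u j)) * (starRingEnd ℂ) (v j))).im = 0 := by
    have hsplit : ∑ j : ZMod M, ((-(1 / (2 * (h : ℂ) ^ 2)) * (v (j + 1) - 2 * v j + v (j - 1))
            + G (w j) (u j)) * (starRingEnd ℂ) (v j))
        = ((-(1 / (2 * h ^ 2)) : ℝ) : ℂ) *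
            (∑ j : ZMod M, (v (j + 1) - 2 * v j + v (j - 1)) * (starRingEnd ℂ) (v j))
          + ∑ j : ZMod M, G (w j) (u j) * (starRingEnd ℂ) (v j) := by
      rw [Finset.mul_sum, ← Finset.sum_add_distrib]
      refine Finset.sum_congr rfl fun j _ => ?_
      push_cast
      ring
    rw [hsplit]
    rw [Complex.add_im, Complex.im_ofReal_mul, hT, Complex.im_sum]
    simp only [hGim, Finset.sum_const_zero]
    ring
  have hfinal : ∑ j : ZMod M, (‖w j‖ ^ 2 - ‖u j‖ ^ 2) = 0 := by
    rw [← hlhs, hsum, Complex.im_ofReal_mul, hrhs, mul_zero]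
  rw [← sub_eq_zero, ← Finset.sum_sub_distrib]
  exact hfinal
end

section
/- Let M ≥ 1 be an integer, h > 0, τ > 0, ε > 0, λ ∈ ℝ, set f_ε(s) = 2λ·ln(ε + √s), F_ε(ρ) = ∫₀^ρ f_ε(s) ds, and G_ε(z₁,z₂) = (∫₀¹ f_ε(θ|z₁|² + (1−θ)|z₂|²) dθ)·(z₁ + z₂)/2 for z₁, z₂ ∈ ℂ. Suppose u, w : ZMod M → ℂ satisfy the Crank-Nicolson finite difference relation i·(w(j) − u(j))/τ = −(1/(2h²))·((u(j+1) − 2u(j) + u(j−1)) + (w(j+1) − 2w(j) + w(j−1))) + G_ε(w(j), u(j)) for every j ∈ ZMod M. Then the discrete energy E_h(z) = h·∑_{j ∈ ZMod M} |(z(j+1) − z(j))/h|² + h·∑_{j ∈ ZMod M} F_ε(|z(j)|²) is conserved: E_h(w) = E_h(u). -/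
open Complex intervalIntegral

lemma f_cont (ε lam : ℝ) (hε : 0 < ε) :
    Continuous (fun s : ℝ => 2 * lam * Real.log (ε + Real.sqrt s)) := by
  apply Continuous.mul continuous_const
  apply Continuous.log (by continuity)
  intro s
  have := Real.sqrt_nonneg s
  positivity

lemma key_ftc (ε lam : ℝ) (hε : 0 < ε) (a b : ℝ) :
    (∫ θ in (0:ℝ)..1, 2 * lam * Real.log (ε + Real.sqrt (θ * b + (1 - θ) * a))) * (b - a)
    = (∫ s in (0:ℝ)..b, 2 * lam * Real.log (ε + Real.sqrt s))
      - ∫ s in (0:ℝ)..a, 2 * lam * Real.log (ε + Real.sqrt s) := by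
  set f : ℝ → ℝ := fun s => 2 * lam * Real.log (ε + Real.sqrt s) with hf
  have hc := f_cont ε lam hε
  rcases eq_or_ne b a with rfl | hba
  · simp
  have h1 : (fun θ : ℝ => 2 * lam * Real.log (ε + Real.sqrt (θ * b + (1 - θ) * a)))
      = fun θ : ℝ => f ((b - a) * θ + a) := by
    funext θ; simp only [hf]; ring_nf
  have h2 : ((∫ s in (0:ℝ)..b, f s) - ∫ s in (0:ℝ)..a, f s) = ∫ s in a..b, f s :=
    integral_interval_sub_left (hc.intervalIntegrable 0 b) (hc.intervalIntegrable 0 a)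
  rw [h1, integral_comp_mul_add f (sub_ne_zero.mpr hba) a, h2]
  simp only [mul_zero, zero_add, mul_one, sub_add_cancel, smul_eq_mul]
  field_simp

lemma shift_sum {M : ℕ} [NeZero M] (g : ZMod M → ℂ) :
    ∑ j : ZMod M, g (j + 1) = ∑ j : ZMod M, g j :=
  Fintype.sum_equiv (Equiv.addRight 1) _ _ (fun _ => rfl)

lemma sbp {M : ℕ} [NeZero M] (z v : ZMod M → ℂ) :
    ∑ j : ZMod M, (z (j+1) - 2 * z j + z (j-1)) * (starRingEnd ℂ) (v j)
    = -∑ j : ZMod M, (z (j+1) - z j) * (starRingEnd ℂ) (v (j+1) - v j) := by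
  have h1 : ∑ j : ZMod M, (z (j+1) - z j) * (starRingEnd ℂ) (v (j+1))
      = ∑ j : ZMod M, (z j - z (j-1)) * (starRingEnd ℂ) (v j) := by
    exact Fintype.sum_equiv (Equiv.addRight 1) _ _ (fun j => by simp [add_sub_cancel_right])
  calc ∑ j : ZMod M, (z (j+1) - 2 * z j + z (j-1)) * (starRingEnd ℂ) (v j)
      = ∑ j : ZMod M, ((z (j+1) - z j) * (starRingEnd ℂ) (v j)
          - (z j - z (j-1)) * (starRingEnd ℂ) (v j)) := by
        apply Finset.sum_congr rfl; intro j _; ring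
    _ = ∑ j : ZMod M, (z (j+1) - z j) * (starRingEnd ℂ) (v j)
          - ∑ j : ZMod M, (z (j+1) - z j) * (starRingEnd ℂ) (v (j+1)) := by
        rw [Finset.sum_sub_distrib, h1]
    _ = -∑ j : ZMod M, (z (j+1) - z j) * (starRingEnd ℂ) (v (j+1) - v j) := by
        rw [← Finset.sum_sub_distrib, ← Finset.sum_neg_distrib]
        apply Finset.sum_congr rfl; intro j _
        simp only [map_sub]; ring

lemma re_helper (a b : ℂ) : ((a + b) * (starRingEnd ℂ) (a - b)).re
    = ‖a‖ ^ 2 - ‖b‖ ^ 2 := by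
  rw [Complex.sq_norm, Complex.sq_norm]
  simp [Complex.mul_re, Complex.normSq_apply]; ring

theorem stmt_16 (M : ℕ) [NeZero M] (hM : 1 ≤ M) (h τ ε lam : ℝ)
    (hh : 0 < h) (hτ : 0 < τ) (hε : 0 < ε)
    (F : ℝ → ℝ)
    (hF : ∀ ρ : ℝ, F ρ = ∫ s in (0:ℝ)..ρ, 2 * lam * Real.log (ε + Real.sqrt s))
    (G : ℂ → ℂ → ℂ)
    (hG : ∀ z₁ z₂ : ℂ, G z₁ z₂ =
      ((∫ θ in (0:ℝ)..1,
          2 * lam * Real.log (ε + Real.sqrt (θ * ‖z₁‖ ^ 2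
            + (1 - θ) * ‖z₂‖ ^ 2))) : ℝ) * (z₁ + z₂) / 2)
    (u w : ZMod M → ℂ)
    (hCN : ∀ j : ZMod M,
      Complex.I * (w j - u j) / (τ : ℂ)
        = -(1 / (2 * (h : ℂ) ^ 2)) *
            ((u (j + 1) - 2 * u j + u (j - 1)) + (w (j + 1) - 2 * w j + w (j - 1)))
          + G (w j) (u j)) :
    h * ∑ j : ZMod M, ‖(w (j + 1) - w j) / (h : ℂ)‖ ^ 2
      + h * ∑ j : ZMod M, F (‖w j‖ ^ 2)
    = h * ∑ j : ZMod M, ‖(u (j + 1) - u j) / (h : ℂ)‖ ^ 2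
      + h * ∑ j : ZMod M, F (‖u j‖ ^ 2) := by
  have hτ' : (τ:ℂ) ≠ 0 := by exact_mod_cast hτ.ne'
  have hh' : (h:ℂ) ≠ 0 := by exact_mod_cast hh.ne'
  set C : ℂ →+* ℂ := starRingEnd ℂ
  -- pointwise multiplied equation
  have step : ∀ j : ZMod M,
      Complex.I * (w j - u j) * C (w j - u j)
      = (τ:ℂ) * ((-(1 / (2 * (h : ℂ) ^ 2)) *
            ((u (j + 1) - 2 * u j + u (j - 1)) + (w (j + 1) - 2 * w j + w (j - 1)))
          + G (w j) (u j)) * C (w j - u j)) := by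
    intro j
    have h0 := hCN j
    have h1 : Complex.I * (w j - u j) = (τ:ℂ) * (-(1 / (2 * (h : ℂ) ^ 2)) *
            ((u (j + 1) - 2 * u j + u (j - 1)) + (w (j + 1) - 2 * w j + w (j - 1)))
          + G (w j) (u j)) := by
      rw [← h0]; field_simp
    rw [h1]; ring
  -- sum the pointwise identity
  have hsum : ∑ j : ZMod M, Complex.I * (w j - u j) * C (w j - u j)
      = (τ:ℂ) * ∑ j : ZMod M, ((-(1 / (2 * (h : ℂ) ^ 2)) *
            ((u (j + 1) - 2 * u j + u (j - 1)) + (w (j + 1) - 2 * w j + w (j - 1)))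
          + G (w j) (u j)) * C (w j - u j)) := by
    rw [Finset.mul_sum]; exact Finset.sum_congr rfl (fun j _ => step j)
  have hre0 : (∑ j : ZMod M, Complex.I * (w j - u j) * C (w j - u j)).re = 0 := by
    rw [Complex.re_sum]
    apply Finset.sum_eq_zero
    intro j _
    rw [mul_assoc, Complex.mul_conj]
    simp
  -- re of the G terms
  have reG : ∀ j : ZMod M, (G (w j) (u j) * C (w j - u j)).re
      = (1/2) * (F (‖w j‖ ^ 2) - F (‖u j‖ ^ 2)) := by
    intro j
    rw [hG]
    set c : ℝ := ∫ θ in (0:ℝ)..1, 2 * lam * Real.log (ε + Real.sqrt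
      (θ * ‖w j‖ ^ 2 + (1 - θ) * ‖u j‖ ^ 2)) with hc
    have e1 : ((c:ℂ) * (w j + u j) / 2 * C (w j - u j))
        = ((c/2 : ℝ):ℂ) * ((w j + u j) * C (w j - u j)) := by push_cast; ring
    rw [e1, Complex.re_ofReal_mul, re_helper]
    have hk := key_ftc ε lam hε (‖u j‖^2) (‖w j‖^2)
    rw [← hF (‖w j‖^2), ← hF (‖u j‖^2), ← hc] at hk
    linarith [hk]
  -- summation by parts
  have hA : (∑ j : ZMod M, (((u (j+1) - 2*u j + u (j-1)) + (w (j+1) - 2*w j + w (j-1)))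
        * C (w j - u j)))
      = -∑ j : ZMod M, ((u (j+1) + w (j+1)) - (u j + w j))
          * C ((w (j+1) - u (j+1)) - (w j - u j)) := by
    have hs := sbp (fun j => u j + w j) (fun j => w j - u j)
    rw [← hs]
    apply Finset.sum_congr rfl; intro j _; ring_nf; rfl
  have point : ∀ j : ZMod M, (((u (j+1) + w (j+1)) - (u j + w j))
        * C ((w (j+1) - u (j+1)) - (w j - u j))).re
      = ‖w (j+1) - w j‖^2 - ‖u (j+1) - u j‖^2 := by
    intro j
    have e : ((u (j+1) + w (j+1)) - (u j + w j)) * C ((w (j+1) - u (j+1)) - (w j - u j))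
        = ((w (j+1) - w j) + (u (j+1) - u j)) * C ((w (j+1) - w j) - (u (j+1) - u j)) := by
      rw [show ((w (j+1) - u (j+1)) - (w j - u j)) = ((w (j+1) - w j) - (u (j+1) - u j)) by ring]
      ring
    rw [e, re_helper]
  have hAre : (∑ j : ZMod M, (((u (j+1) - 2*u j + u (j-1)) + (w (j+1) - 2*w j + w (j-1)))
        * C (w j - u j))).re
      = -∑ j : ZMod M, (‖w (j+1) - w j‖^2 - ‖u (j+1) - u j‖^2) := by
    rw [hA, Complex.neg_re, Complex.re_sum]
    exact congrArg Neg.neg (Finset.sum_congr rfl fun j _ => point j)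
  have hB : (∑ j : ZMod M, G (w j) (u j) * C (w j - u j)).re
      = ∑ j : ZMod M, (1/2) * (F (‖w j‖^2) - F (‖u j‖^2)) := by
    rw [Complex.re_sum]; exact Finset.sum_congr rfl fun j _ => reG j
  have split : ∑ j : ZMod M, ((-(1 / (2 * (h : ℂ) ^ 2)) *
            ((u (j + 1) - 2 * u j + u (j - 1)) + (w (j + 1) - 2 * w j + w (j - 1)))
          + G (w j) (u j)) * C (w j - u j))
      = ((-(1/(2*h^2)) : ℝ):ℂ) * ∑ j : ZMod M, (((u (j+1) - 2*u j + u (j-1))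
            + (w (j+1) - 2*w j + w (j-1))) * C (w j - u j))
        + ∑ j : ZMod M, G (w j) (u j) * C (w j - u j) := by
    rw [Finset.mul_sum, ← Finset.sum_add_distrib]
    apply Finset.sum_congr rfl; intro j _
    push_cast; ring
  have hre := congrArg Complex.re hsum
  rw [hre0, split] at hre
  rw [Complex.re_ofReal_mul, Complex.add_re, Complex.re_ofReal_mul, hAre, hB] at hre
  set Sw : ℝ := ∑ j : ZMod M, ‖w (j+1) - w j‖^2 with hSw
  set Su : ℝ := ∑ j : ZMod M, ‖u (j+1) - u j‖^2 with hSu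
  set Fw : ℝ := ∑ j : ZMod M, F (‖w j‖^2) with hFw
  set Fu : ℝ := ∑ j : ZMod M, F (‖u j‖^2) with hFu
  have hs1 : ∑ j : ZMod M, (‖w (j+1) - w j‖^2 - ‖u (j+1) - u j‖^2)
      = Sw - Su := Finset.sum_sub_distrib _ _
  have hs2 : ∑ j : ZMod M, (1/2) * (F (‖w j‖^2) - F (‖u j‖^2))
      = (1/2) * (Fw - Fu) := by rw [← Finset.mul_sum, Finset.sum_sub_distrib]
  rw [hs1, hs2] at hre
  have h2 : -(1/(2*h^2)) * -(Sw - Su) + (1/2) * (Fw - Fu) = 0 := by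
    rcases mul_eq_zero.mp hre.symm with h' | h'
    · exact absurd h' hτ.ne'
    · exact h'
  have gw : ∑ j : ZMod M, ‖(w (j+1) - w j)/(h:ℂ)‖^2 = Sw / h^2 := by
    rw [hSw, Finset.sum_div]
    apply Finset.sum_congr rfl; intro j _
    rw [norm_div, Complex.norm_real, Real.norm_eq_abs, abs_of_pos hh, div_pow]
  have gu : ∑ j : ZMod M, ‖(u (j+1) - u j)/(h:ℂ)‖^2 = Su / h^2 := by
    rw [hSu, Finset.sum_div]
    apply Finset.sum_congr rfl; intro j _
    rw [norm_div, Complex.norm_real, Real.norm_eq_abs, abs_of_pos hh, div_pow]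
  rw [gw, gu]
  have hh2 : (0:ℝ) < h^2 := by positivity
  field_simp at h2 ⊢
  nlinarith [h2, hh2]
end
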